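/- arXiv:2506.05907 — 4 statements merged into one kernel-verified Lean document; each statement's English description precedes it below -/
import Mathlib

section
/- Let (Ω, 𝒜) carry a measurable flow θ and a stationary probability measure P, let Φ be an invariant random measure on ℝ^d with intensity γ ∈ (0, ∞), and let K be an invariant probability kernel from Ω × ℝ^d to ℝ^d. Then for every Borel set B ⊆ ℝ^d, α_{KΦ}(B) = γ ∫_Ω [∫ (K(ω, y, ·) ⋆ K(ω, 0, ·))(B) Φ(ω, dy)] P^Φ_0(dω), where α_{KΦ} is the reduced second moment measure of the stationary random measure KΦ and ν ⋆ ν' := ∫∫ 1{x − y ∈ ·} ν(dx) ν'(dy) is the tilted convolution of measures ν, ν' on ℝ^d. If in addition Φ is locally square-integrable and P^Φ_{0,y} is a two-point Palm kernel for Φ, then also α_{KΦ}(B) = ∫_{ℝ^d} [∫_Ω (K(ω, y, ·) ⋆ K(ω, 0, ·))(B) P^Φ_{0,y}(dω)] α_Φ(dy) for every Borel B. -/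
open MeasureTheory Filter Set ProbabilityTheory
open scoped ENNReal NNReal Topology Pointwise

noncomputable section

/-- Euclidean space `ℝ^d`. -/
abbrev Euc (d : ℕ) : Type := EuclideanSpace ℝ (Fin d)

/-- The unit cube `[0,1]^d`. -/
def unitCube (d : ℕ) : Set (Euc d) := {x | ∀ i, x i ∈ Icc (0 : ℝ) 1}

/-- The half-open unit cube `[0,1)^d`. -/
def cubeIco (d : ℕ) : Set (Euc d) := {x | ∀ i, x i ∈ Ico (0 : ℝ) 1}

/-- A measurable flow on `Ω` indexed by `ℝ^d`. -/
def IsFlow {d : ℕ} {Ω : Type*} [MeasurableSpace Ω] (θ : Euc d → Ω → Ω) : Prop :=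
  Measurable (fun p : Euc d × Ω => θ p.1 p.2) ∧ θ 0 = id ∧ ∀ x y, θ x ∘ θ y = θ (x + y)

/-- A random measure is invariant under the flow `θ`:
`Φ(θ_x ω, B) = Φ(ω, B + x)`, where `B + x = {y | y - x ∈ B}`. -/
def InvariantRM {d : ℕ} {Ω : Type*} (θ : Euc d → Ω → Ω) (Φ : Ω → Measure (Euc d)) : Prop :=
  ∀ ω (x : Euc d) (B : Set (Euc d)), MeasurableSet B →
    Φ (θ x ω) B = Φ ω ((fun y => y - x) ⁻¹' B)

/-- Stationarity of a random measure: for each `x`, the random measure `B ↦ Φ(B + x)`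
has the same distribution as `Φ`. -/
def StationaryRM {d : ℕ} {Ω : Type*} [MeasurableSpace Ω] (P : Measure Ω)
    (Φ : Ω → Measure (Euc d)) : Prop :=
  ∀ x : Euc d,
    Measure.map (fun ω => Measure.map (fun y => y - x) (Φ ω)) P = Measure.map Φ P

/-- Local square-integrability: `E[Φ(B)²] < ∞` for every bounded Borel set `B`. -/
def LocSqInt {d : ℕ} {Ω : Type*} [MeasurableSpace Ω] (P : Measure Ω)
    (Φ : Ω → Measure (Euc d)) : Prop :=
  ∀ B : Set (Euc d), MeasurableSet B → Bornology.IsBounded B →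
    ∫⁻ ω, (Φ ω B) ^ 2 ∂P < ⊤

/-- `Φ` has intensity `γ`, i.e. `E[Φ([0,1]^d)] = γ`. -/
def HasIntensity {d : ℕ} {Ω : Type*} [MeasurableSpace Ω] (P : Measure Ω)
    (Φ : Ω → Measure (Euc d)) (γ : ℝ≥0∞) : Prop :=
  ∫⁻ ω, Φ ω (unitCube d) ∂P = γ

/-- `α` is the reduced second moment measure of `Φ`:
`α(B) = E[∫∫ 1{x ∈ [0,1]^d, y - x ∈ B} Φ(dy) Φ(dx)]`. -/
def IsReducedSecondMoment {d : ℕ} {Ω : Type*} [MeasurableSpace Ω] (P : Measure Ω)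
    (Φ : Ω → Measure (Euc d)) (α : Measure (Euc d)) : Prop :=
  ∀ B : Set (Euc d), MeasurableSet B →
    α B = ∫⁻ ω, ∫⁻ x in unitCube d, Φ ω ((fun y => y - x) ⁻¹' B) ∂(Φ ω) ∂P

/-- An invariant probability kernel from `Ω × ℝ^d` to `ℝ^d`:
jointly measurable, probability-valued and `K(ω, x, B + x) = K(θ_x ω, 0, B)`. -/
def IsInvariantKernel {d : ℕ} {Ω : Type*} [MeasurableSpace Ω]
    (θ : Euc d → Ω → Ω) (K : Ω → Euc d → Measure (Euc d)) : Prop :=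
  Measurable (fun p : Ω × Euc d => K p.1 p.2) ∧
  (∀ ω x, IsProbabilityMeasure (K ω x)) ∧
  ∀ ω (x : Euc d) (B : Set (Euc d)), MeasurableSet B →
    K ω x ((fun y => y - x) ⁻¹' B) = K (θ x ω) 0 B

/-- The destination `KΦ(ω, ·) = ∫ K(ω, x, ·) Φ(ω, dx)`. -/
def transported {d : ℕ} {Ω : Type*} [MeasurableSpace Ω] (K : Ω → Euc d → Measure (Euc d))
    (Φ : Ω → Measure (Euc d)) (ω : Ω) : Measure (Euc d) :=
  (Φ ω).bind (K ω)

/-- The recentred kernel `K*(ω, x, B) := K(ω, x, B + x)`. -/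
def recenter {d : ℕ} {Ω : Type*} (K : Ω → Euc d → Measure (Euc d)) (ω : Ω) (x : Euc d) :
    Measure (Euc d) :=
  Measure.map (fun y => y - x) (K ω x)

/-- Total variation norm between two measures: `‖μ − ν‖ = 2 sup_A |μ(A) − ν(A)|`. -/
def tvDist {X : Type*} [MeasurableSpace X] (μ ν : Measure X) : ℝ≥0∞ :=
  2 * ⨆ (A : Set X) (_ : MeasurableSet A), max (μ A - ν A) (ν A - μ A)

/-- Variance of the (extended-real-valued) random variable `f` under `P`. -/
def rVar {Ω : Type*} [MeasurableSpace Ω] (P : Measure Ω) (f : Ω → ℝ≥0∞) : ℝ :=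
  (∫ ω, ((f ω).toReal) ^ 2 ∂P) - (∫ ω, (f ω).toReal ∂P) ^ 2

/-- `Ψ` has asymptotic variance `c` with respect to the window `W`:
`Var[Ψ(rW)] / λ_d(rW) → c` as `r → ∞`. -/
def HasAsymptoticVariance {d : ℕ} {Ω : Type*} [MeasurableSpace Ω] (P : Measure Ω)
    (Ψ : Ω → Measure (Euc d)) (W : Set (Euc d)) (c : ℝ) : Prop :=
  Tendsto (fun r : ℝ => rVar P (fun ω => Ψ ω (r • W)) / (volume (r • W)).toReal)
    atTop (𝓝 c)

/-- Hyperuniformity with respect to `W`: vanishing asymptotic variance. -/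
def Hyperuniform {d : ℕ} {Ω : Type*} [MeasurableSpace Ω] (P : Measure Ω)
    (Ψ : Ω → Measure (Euc d)) (W : Set (Euc d)) : Prop :=
  HasAsymptoticVariance P Ψ W 0

/-- `W ∈ 𝒦₀`: bounded convex set containing `0` in its interior. -/
def IsK0 {d : ℕ} (W : Set (Euc d)) : Prop :=
  Convex ℝ W ∧ Bornology.IsBounded W ∧ (0 : Euc d) ∈ interior W

/-- A set `W` is Fourier smooth: `|𝟙_W^(k)| ≤ c (1 + ‖k‖)^{-(d+ϑ)/2}`. -/
def FourierSmooth {d : ℕ} (W : Set (Euc d)) : Prop :=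
  ∃ c t : ℝ, 0 < c ∧ 0 < t ∧ ∀ k : Euc d,
    ‖∫ x in W, Complex.exp (-((inner ℝ k x : ℝ) : ℂ) * Complex.I)‖ ≤
      c * (1 + ‖k‖) ^ (-(((d : ℝ) + t) / 2))

/-- `P0` is the Palm probability measure of `Φ`:
`γ P0(A) = E[∫ 1{θ_x ω ∈ A} 1{x ∈ [0,1]^d} Φ(ω, dx)]`. -/
def IsPalm {d : ℕ} {Ω : Type*} [MeasurableSpace Ω] (P : Measure Ω) (θ : Euc d → Ω → Ω)
    (Φ : Ω → Measure (Euc d)) (γ : ℝ≥0∞) (P0 : Measure Ω) : Prop :=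
  IsProbabilityMeasure P0 ∧
  ∀ A : Set Ω, MeasurableSet A →
    γ * P0 A = ∫⁻ ω, ∫⁻ x in unitCube d, A.indicator (fun _ => (1 : ℝ≥0∞)) (θ x ω) ∂(Φ ω) ∂P

/-- `P2` is a two-point Palm kernel of `Φ` (with reduced second moment measure `α`). -/
def IsTwoPointPalm {d : ℕ} {Ω : Type*} [MeasurableSpace Ω] (P : Measure Ω)
    (θ : Euc d → Ω → Ω) (Φ : Ω → Measure (Euc d)) (α : Measure (Euc d))
    (P2 : Euc d → Measure Ω) : Prop :=
  (∀ y, IsProbabilityMeasure (P2 y)) ∧ Measurable P2 ∧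
  ∀ f : Euc d → Euc d → Ω → ℝ≥0∞,
    Measurable (fun p : Euc d × Euc d × Ω => f p.1 p.2.1 p.2.2) →
    ∫⁻ ω, ∫⁻ x, ∫⁻ y, f x (y - x) (θ x ω) ∂(Φ ω) ∂(Φ ω) ∂P =
      ∫⁻ x, ∫⁻ y, ∫⁻ ω, f x y ω ∂(P2 y) ∂α ∂(volume : Measure (Euc d))

/-- Tilted convolution `ν ⋆ ν' = ∫∫ 1{x − y ∈ ·} ν(dx) ν'(dy)`. -/
def tconv {d : ℕ} (μ ν : Measure (Euc d)) : Measure (Euc d) :=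
  Measure.map (fun p : Euc d × Euc d => p.1 - p.2) (μ.prod ν)

/-- A measure on `ℝ^d` is purely discrete (purely atomic). -/
def PurelyDiscrete {d : ℕ} (μ : Measure (Euc d)) : Prop :=
  μ {x | μ {x} = 0} = 0

/-- A stationary family of `ℝ^d`-valued random vectors indexed by an additive group. -/
def IsStationaryFamily {ι Ω : Type*} [Add ι] [MeasurableSpace Ω] {d : ℕ}
    (P : Measure Ω) (Z : ι → Ω → Euc d) : Prop :=
  ∀ (v : ι) (n : ℕ) (x : Fin n → ι),
    Measure.map (fun ω (i : Fin n) => Z (x i + v) ω) P =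
      Measure.map (fun ω (i : Fin n) => Z (x i) ω) P

/-- A Gaussian family of `ℝ^d`-valued random vectors: every finite real linear
combination of coordinates is (possibly degenerate) Gaussian. -/
def IsGaussianFamily {ι Ω : Type*} [MeasurableSpace Ω] {d : ℕ}
    (P : Measure Ω) (Z : ι → Ω → Euc d) : Prop :=
  ∀ (n : ℕ) (x : Fin n → ι) (c : Fin n → Euc d), ∃ (m : ℝ) (v : ℝ≥0),
    Measure.map (fun ω => ∑ i, (inner ℝ (c i) (Z (x i) ω) : ℝ)) P = ProbabilityTheory.gaussianReal m v

/-- The cross-covariance matrix of two `ℝ^d`-valued random vectors. -/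
def covMat {Ω : Type*} [MeasurableSpace Ω] {d : ℕ} (P : Measure Ω) (X Y : Ω → Euc d) :
    Matrix (Fin d) (Fin d) ℝ :=
  Matrix.of fun i j => (∫ ω, X ω i * Y ω j ∂P) - (∫ ω, X ω i ∂P) * (∫ ω, Y ω j ∂P)

/-- The lattice point of `ℤ^d ⊆ ℝ^d` corresponding to `z`. -/
def latticePt (d : ℕ) (z : Fin d → ℤ) : Euc d :=
  (EuclideanSpace.equiv (Fin d) ℝ).symm (fun i => (z i : ℝ))

section RSHelpers

variable {d : ℕ} {Ω : Type} [MeasurableSpace Ω]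

lemma rs_measurableSet_unitCube : MeasurableSet (unitCube d) := by
  have h : unitCube d = ⋂ i, (fun x : Euc d => x i) ⁻¹' Icc (0:ℝ) 1 := by
    ext x; simp [unitCube]
  rw [h]
  exact MeasurableSet.iInter fun i => (by fun_prop : Measurable fun x : Euc d => x i) measurableSet_Icc

lemma rs_volume_unitCube : (volume : Measure (Euc d)) (unitCube d) = 1 := by
  have he : unitCube d
      = (MeasurableEquiv.toLp 2 (Fin d → ℝ)).symm ⁻¹' (Set.univ.pi fun _ => Icc (0:ℝ) 1) := by
    ext x
    simp only [unitCube, Set.mem_setOf_eq, Set.mem_preimage, Set.mem_pi, Set.mem_univ,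
      forall_true_left]
    rfl
  rw [he, (EuclideanSpace.volume_preserving_symm_measurableEquiv_toLp (Fin d)).measure_preimage
    (MeasurableSet.univ_pi fun _ => measurableSet_Icc).nullMeasurableSet]
  rw [volume_pi_pi]
  simp [Real.volume_Icc]

lemma rs_msub (x : Euc d) : Measurable fun y : Euc d => y - x :=
  measurable_id.sub measurable_const

lemma rs_madd (x : Euc d) : Measurable fun y : Euc d => y + x :=
  measurable_id.add measurable_const

lemma rs_theta_meas {θ : Euc d → Ω → Ω} (hθ : IsFlow θ) (x : Euc d) : Measurable (θ x) :=
  hθ.1.comp (measurable_const.prodMk measurable_id)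

lemma rs_theta_comp {θ : Euc d → Ω → Ω} (hθ : IsFlow θ) (x y : Euc d) (ω : Ω) :
    θ x (θ y ω) = θ (x + y) ω := by
  have := congrFun (hθ.2.2 x y) ω
  simpa using this

lemma rs_phi_map {θ : Euc d → Ω → Ω} {Φ : Ω → Measure (Euc d)}
    (hΦinv : InvariantRM θ Φ) (x : Euc d) (ω : Ω) :
    Φ (θ x ω) = Measure.map (fun y => y - x) (Φ ω) := by
  refine Measure.ext fun s hs => ?_
  rw [Measure.map_apply (rs_msub x) hs]
  exact hΦinv ω x s hs

lemma rs_K_map {θ : Euc d → Ω → Ω} {K : Ω → Euc d → Measure (Euc d)}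
    (hK : IsInvariantKernel θ K) (ω : Ω) (x : Euc d) :
    K ω x = Measure.map (fun y => y + x) (K (θ x ω) 0) := by
  refine Measure.ext fun s hs => ?_
  rw [Measure.map_apply (rs_madd x) hs]
  have h := hK.2.2 ω x ((fun y => y + x) ⁻¹' s) ((rs_madd x) hs)
  have hset : (fun y => y - x) ⁻¹' ((fun y => y + x) ⁻¹' s) = s := by
    ext z; simp
  rw [hset] at h
  exact h

lemma rs_isSFiniteKernel (Φ : Ω → Measure (Euc d)) (hΦm : Measurable Φ)
    (hΦlf : ∀ ω, IsLocallyFiniteMeasure (Φ ω)) :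
    IsSFiniteKernel (ProbabilityTheory.Kernel.mk Φ hΦm) := by
  classical
  set sh : ℕ → Set (Euc d) := disjointed (fun n => Metric.closedBall (0:Euc d) n) with hsh
  have hshm : ∀ n, MeasurableSet (sh n) :=
    MeasurableSet.disjointed fun n => measurableSet_closedBall
  have hcov : (⋃ n, sh n) = Set.univ := by
    rw [hsh, iUnion_disjointed]
    apply Set.eq_univ_of_forall
    intro x
    obtain ⟨n, hn⟩ := exists_nat_ge ‖x‖
    exact Set.mem_iUnion.2 ⟨n, by simpa [Metric.mem_closedBall, dist_zero_right] using hn⟩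
  have hfin : ∀ ω n, Φ ω (sh n) < ⊤ := by
    intro ω n
    haveI := hΦlf ω
    exact lt_of_le_of_lt (measure_mono (disjointed_subset _ n)) measure_closedBall_lt_top
  let cnd : ℕ → ℕ → Set Ω := fun n m => (fun ω => Φ ω (sh n)) ⁻¹' (Set.Ico (m : ℝ≥0∞) (m+1))
  have hcndm : ∀ n m, MeasurableSet (cnd n m) := fun n m =>
    ((Measure.measurable_coe (hshm n)).comp hΦm) measurableSet_Ico
  have hresm : ∀ n, Measurable (fun ω => (Φ ω).restrict (sh n)) := by
    intro n
    apply Measure.measurable_of_measurable_coe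
    intro s hs
    simp_rw [Measure.restrict_apply hs]
    exact (Measure.measurable_coe (hs.inter (hshm n))).comp hΦm
  let κ : ℕ → ℕ → ProbabilityTheory.Kernel Ω (Euc d) := fun n m =>
    ProbabilityTheory.Kernel.mk
      ((cnd n m).piecewise (fun ω => (Φ ω).restrict (sh n)) (fun _ => 0))
      (Measurable.piecewise (hcndm n m) (hresm n) measurable_const)
  have hκfin : ∀ n m, ProbabilityTheory.IsFiniteKernel (κ n m) := by
    intro n m
    refine ⟨(m:ℝ≥0∞) + 1, by simp [ENNReal.add_lt_top], fun ω => ?_⟩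
    by_cases hω : ω ∈ cnd n m
    · have : κ n m ω = (Φ ω).restrict (sh n) := by
        simp only [κ, ProbabilityTheory.Kernel.coe_mk, Set.piecewise_eq_of_mem _ _ _ hω]
      rw [this, Measure.restrict_apply MeasurableSet.univ, Set.univ_inter]
      exact le_of_lt hω.2
    · have : κ n m ω = 0 := by
        simp only [κ, ProbabilityTheory.Kernel.coe_mk, Set.piecewise_eq_of_notMem _ _ _ hω]
      simp [this]
  refine ⟨⟨fun i => κ ((Denumerable.eqv (ℕ×ℕ)).symm i).1 ((Denumerable.eqv (ℕ×ℕ)).symm i).2,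
    fun i => hκfin _ _, ?_⟩⟩
  refine ProbabilityTheory.Kernel.ext fun ω => Measure.ext fun s hs => ?_
  rw [ProbabilityTheory.Kernel.sum_apply' _ _ hs]
  have h1 : ∑' (i:ℕ),
      (κ ((Denumerable.eqv (ℕ×ℕ)).symm i).1 ((Denumerable.eqv (ℕ×ℕ)).symm i).2 ω) s
      = ∑' (p : ℕ×ℕ), (κ p.1 p.2 ω) s :=
    ((Denumerable.eqv (ℕ×ℕ)).symm).tsum_eq (fun p => (κ p.1 p.2 ω) s)
  rw [h1]
  have h2 : ∀ n, ∑' (m:ℕ), (κ n m ω) s = Φ ω (s ∩ sh n) := by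
    intro n
    have hv : Φ ω (sh n) ≠ ⊤ := (hfin ω n).ne
    set m₀ : ℕ := ⌊(Φ ω (sh n)).toNNReal⌋₊ with hm₀
    have hmem : ω ∈ cnd n m₀ := by
      have hle : ((m₀:ℕ):ℝ≥0∞) ≤ Φ ω (sh n) := by
        rw [← ENNReal.coe_toNNReal hv]
        exact_mod_cast Nat.floor_le (zero_le : 0 ≤ (Φ ω (sh n)).toNNReal)
      have hlt : Φ ω (sh n) < (m₀:ℝ≥0∞) + 1 := by
        rw [← ENNReal.coe_toNNReal hv]
        exact_mod_cast Nat.lt_floor_add_one ((Φ ω (sh n)).toNNReal)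
      exact ⟨hle, hlt⟩
    rw [tsum_eq_single m₀ ?_]
    · have : κ n m₀ ω = (Φ ω).restrict (sh n) := by
        simp only [κ, ProbabilityTheory.Kernel.coe_mk, Set.piecewise_eq_of_mem _ _ _ hmem]
      rw [this, Measure.restrict_apply hs]
    · intro m hm
      have hnot : ω ∉ cnd n m := by
        intro hc
        apply hm
        have hc1 : ((m:ℕ):ℝ≥0∞) ≤ Φ ω (sh n) := hc.1
        have hc2 : Φ ω (sh n) < (m:ℝ≥0∞) + 1 := hc.2
        have h1' : (m:ℝ≥0) ≤ (Φ ω (sh n)).toNNReal := by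
          rw [← ENNReal.coe_toNNReal hv] at hc1
          exact_mod_cast hc1
        have h2' : ((Φ ω (sh n)).toNNReal : ℝ≥0) < (m:ℝ≥0) + 1 := by
          rw [← ENNReal.coe_toNNReal hv] at hc2
          exact_mod_cast hc2
        have := (Nat.floor_eq_iff (zero_le : 0 ≤ (Φ ω (sh n)).toNNReal)).2
          ⟨by exact_mod_cast h1', by exact_mod_cast h2'⟩
        rw [hm₀, this]
      have : κ n m ω = 0 := by
        simp only [κ, ProbabilityTheory.Kernel.coe_mk, Set.piecewise_eq_of_notMem _ _ _ hnot]
      simp [this]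
  have h3 : ∑' (p : ℕ × ℕ), (κ p.1 p.2 ω) s = ∑' (n:ℕ), Φ ω (s ∩ sh n) := by
    rw [ENNReal.tsum_prod']
    exact tsum_congr fun n => h2 n
  have h4 : (∑' (n:ℕ), Φ ω (s ∩ sh n)) = Φ ω s := by
    calc (∑' (n:ℕ), Φ ω (s ∩ sh n)) = Φ ω (⋃ n, s ∩ sh n) := by
          refine (measure_iUnion ?_ fun n => hs.inter (hshm n)).symm
          intro i j hij
          exact ((disjoint_disjointed _) hij).mono Set.inter_subset_right Set.inter_subset_right
      _ = Φ ω s := by rw [← Set.inter_iUnion, hcov, Set.inter_univ]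
  rw [h3, h4]
  rfl

lemma rs_meas_lint (Φ : Ω → Measure (Euc d)) (hΦm : Measurable Φ)
    (hΦlf : ∀ ω, IsLocallyFiniteMeasure (Φ ω)) {f : Ω → Euc d → ℝ≥0∞}
    (hf : Measurable (Function.uncurry f)) :
    Measurable fun ω => ∫⁻ u, f ω u ∂(Φ ω) := by
  haveI := rs_isSFiniteKernel Φ hΦm hΦlf
  exact Measurable.lintegral_kernel_prod_right
    (κ := ProbabilityTheory.Kernel.mk Φ hΦm) hf

lemma rs_meas_sec (Φ : Ω → Measure (Euc d)) (hΦm : Measurable Φ)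
    (hΦlf : ∀ ω, IsLocallyFiniteMeasure (Φ ω)) {t : Set (Ω × Euc d)} (ht : MeasurableSet t) :
    Measurable fun ω => Φ ω (Prod.mk ω ⁻¹' t) := by
  haveI := rs_isSFiniteKernel Φ hΦm hΦlf
  exact ProbabilityTheory.Kernel.measurable_kernel_prodMk_left
    (κ := ProbabilityTheory.Kernel.mk Φ hΦm) ht

end RSHelpers
section RSHelpers2

variable {d : ℕ} {Ω : Type} [MeasurableSpace Ω]
  {P : Measure Ω} {θ : Euc d → Ω → Ω} {Φ : Ω → Measure (Euc d)}
  {K : Ω → Euc d → Measure (Euc d)} {γ : ℝ≥0∞} {P0 : Measure Ω}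

lemma rs_K_pt (hθ : IsFlow θ) (hK : IsInvariantKernel θ K) (ω : Ω) (u v : Euc d)
    {s : Set (Euc d)} (hs : MeasurableSet s) :
    K ω v ((fun y => y - u) ⁻¹' s) = K (θ u ω) (v - u) s := by
  have e1 : K ω v = Measure.map (fun y => y + v) (K (θ v ω) 0) := rs_K_map hK ω v
  have e2 : K (θ u ω) (v - u)
      = Measure.map (fun y => y + (v - u)) (K (θ (v-u) (θ u ω)) 0) := rs_K_map hK _ _
  have e3 : θ (v - u) (θ u ω) = θ v ω := by
    rw [rs_theta_comp hθ]; congr 1; abel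
  rw [e3] at e2
  rw [e1, e2, Measure.map_apply (rs_madd v) ((rs_msub u) hs),
      Measure.map_apply (rs_madd (v-u)) hs]
  congr 1
  ext z
  simp [add_sub_assoc]

lemma rs_transported_map (hθ : IsFlow θ) (hΦinv : InvariantRM θ Φ)
    (hK : IsInvariantKernel θ K) (x : Euc d) (ω : Ω) :
    transported K Φ (θ x ω) = Measure.map (fun y => y - x) (transported K Φ ω) := by
  have hKc : ∀ ω', Measurable (K ω') := fun ω' =>
    hK.1.comp (measurable_const.prodMk measurable_id)
  refine Measure.ext fun s hs => ?_
  rw [Measure.map_apply (rs_msub x) hs]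
  rw [transported, transported, Measure.bind_apply hs (hKc _).aemeasurable,
      Measure.bind_apply ((rs_msub x) hs) (hKc _).aemeasurable]
  rw [rs_phi_map hΦinv x ω,
      lintegral_map (show Measurable fun a : Euc d => K (θ x ω) a s from
        (Measure.measurable_coe hs).comp (hKc _)) (rs_msub x)]
  refine lintegral_congr fun v => ?_
  exact (rs_K_pt hθ hK ω x v hs).symm

lemma rs_G_meas (hΦm : Measurable Φ) (hΦlf : ∀ ω, IsLocallyFiniteMeasure (Φ ω))
    (hKm : Measurable fun p : Ω × Euc d => K p.1 p.2)
    {B : Set (Euc d)} (hB : MeasurableSet B) :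
    Measurable fun ω => transported K Φ ω B := by
  have h : ∀ ω, transported K Φ ω B = ∫⁻ u, K ω u B ∂(Φ ω) := fun ω =>
    Measure.bind_apply hB (hKm.comp (measurable_const.prodMk measurable_id)).aemeasurable
  simp_rw [h]
  exact rs_meas_lint Φ hΦm hΦlf ((Measure.measurable_coe hB).comp hKm)

lemma rs_K_pre_meas {X : Type*} [MeasurableSpace X]
    (hKm : Measurable fun p : Ω × Euc d => K p.1 p.2)
    (hKp : ∀ ω x, IsProbabilityMeasure (K ω x))
    {σ : X → Ω} {τ ρ : X → Euc d} (hσ : Measurable σ) (hτ : Measurable τ) (hρ : Measurable ρ)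
    {B : Set (Euc d)} (hB : MeasurableSet B) :
    Measurable fun x => K (σ x) (τ x) ((fun y => y - ρ x) ⁻¹' B) := by
  let κ : ProbabilityTheory.Kernel X (Euc d) :=
    ProbabilityTheory.Kernel.mk (fun x => K (σ x) (τ x)) (hKm.comp (hσ.prodMk hτ))
  haveI : ProbabilityTheory.IsMarkovKernel κ := ⟨fun x => hKp _ _⟩
  have ht : MeasurableSet {q : X × Euc d | q.2 - ρ q.1 ∈ B} :=
    (measurable_snd.sub (hρ.comp measurable_fst)) hB
  exact ProbabilityTheory.Kernel.measurable_kernel_prodMk_left (κ := κ) ht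

lemma rs_ind_ne_top (s : Set (Euc d)) (w : Euc d) :
    s.indicator (fun _ => (1:ℝ≥0∞)) w ≠ ⊤ := by
  by_cases h : w ∈ s <;> simp [Set.indicator_apply, h]

lemma rs_cube_int (z : Euc d) :
    ∫⁻ u, (unitCube d).indicator (fun _ => (1:ℝ≥0∞)) (z + u) ∂(volume : Measure (Euc d)) = 1 := by
  have h : ∀ u : Euc d, (unitCube d).indicator (fun _ => (1:ℝ≥0∞)) (z + u)
      = ((fun u : Euc d => z + u) ⁻¹' unitCube d).indicator (fun _ => (1:ℝ≥0∞)) u := by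
    intro u
    by_cases hm : z + u ∈ unitCube d <;>
      simp [Set.indicator_apply, hm, Set.mem_preimage]
  simp_rw [h]
  rw [lintegral_indicator ((measurable_const_add z) rs_measurableSet_unitCube),
      setLIntegral_const, one_mul,
      measure_preimage_add volume z (unitCube d), rs_volume_unitCube]

end RSHelpers2
section RSCampbell

variable {d : ℕ} {Ω : Type} [MeasurableSpace Ω]
  {P : Measure Ω} {θ : Euc d → Ω → Ω} {Φ : Ω → Measure (Euc d)}
  {γ : ℝ≥0∞} {P0 : Measure Ω}

/-- The refined Campbell theorem, derived from the defining property of the Palm measure. -/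
lemma rs_campbell [IsProbabilityMeasure P] (hθ : IsFlow θ)
    (hPθ : ∀ x : Euc d, Measure.map (θ x) P = P)
    (hΦm : Measurable Φ) (hΦlf : ∀ ω, IsLocallyFiniteMeasure (Φ ω))
    (hΦinv : InvariantRM θ Φ) (hγfin : γ < ⊤) (hP0 : IsPalm P θ Φ γ P0)
    (F : Ω → Euc d → ℝ≥0∞) (hF : Measurable fun p : Ω × Euc d => F p.1 p.2) :
    ∫⁻ ω, ∫⁻ u, F (θ u ω) u ∂(Φ ω) ∂P
      = γ * ∫⁻ ω, ∫⁻ u, F ω u ∂(volume : Measure (Euc d)) ∂P0 := by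
  haveI : IsProbabilityMeasure P0 := hP0.1
  have hθm := hθ.1
  have hgω : ∀ ω : Ω, Measurable (fun u : Euc d => (θ u ω, u)) := fun ω =>
    (hθm.comp (measurable_id.prodMk measurable_const)).prodMk measurable_id
  have hT : Measurable (fun p : Ω × Euc d => θ p.2 p.1) :=
    hθm.comp (measurable_snd.prodMk measurable_fst)
  set m : Measure (Ω × Euc d) := P.bind (fun ω => (Φ ω).map (fun u => (θ u ω, u))) with hm
  have hbm : Measurable fun ω => (Φ ω).map (fun u => (θ u ω, u)) := by
    apply Measure.measurable_of_measurable_coe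
    intro s hs
    have h : ∀ ω, ((Φ ω).map (fun u => (θ u ω, u))) s
        = Φ ω (Prod.mk ω ⁻¹' ((fun p : Ω × Euc d => (θ p.2 p.1, p.2)) ⁻¹' s)) := by
      intro ω
      rw [Measure.map_apply (hgω ω) hs]
      rfl
    simp_rw [h]
    exact rs_meas_sec Φ hΦm hΦlf ((hT.prodMk measurable_snd) hs)
  -- sections
  have hsec : ∀ (A : Set Ω), MeasurableSet A → ∀ (E : Set (Euc d)), MeasurableSet E →
      Measurable fun ω => Φ ω {u | θ u ω ∈ A ∧ u ∈ E} := by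
    intro A hA E hE
    have := rs_meas_sec Φ hΦm hΦlf ((hT hA).inter (measurable_snd hE))
    exact this
  -- m of rectangles as an integral
  have happ : ∀ (A : Set Ω), MeasurableSet A → ∀ (D : Set (Euc d)), MeasurableSet D →
      m (A ×ˢ D) = ∫⁻ ω, Φ ω {u | θ u ω ∈ A ∧ u ∈ D} ∂P := by
    intro A hA D hD
    rw [hm, Measure.bind_apply (hA.prod hD) hbm.aemeasurable]
    refine lintegral_congr fun ω => ?_
    rw [Measure.map_apply (hgω ω) (hA.prod hD)]
    rfl
  -- shift invariance in the second coordinate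
  have hshift : ∀ (A : Set Ω), MeasurableSet A → ∀ (D : Set (Euc d)), MeasurableSet D →
      ∀ t : Euc d, m (A ×ˢ ((fun u => u - t) ⁻¹' D)) = m (A ×ˢ D) := by
    intro A hA D hD t
    rw [happ A hA _ ((rs_msub t) hD), happ A hA D hD]
    have key : ∀ ω, Φ (θ t ω) {u | θ u (θ t ω) ∈ A ∧ u ∈ D}
        = Φ ω {u | θ u ω ∈ A ∧ u ∈ (fun u => u - t) ⁻¹' D} := by
      intro ω
      have hms : MeasurableSet {u : Euc d | θ u (θ t ω) ∈ A ∧ u ∈ D} :=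
        MeasurableSet.inter
          ((hθm.comp (measurable_id.prodMk measurable_const)) hA) hD
      rw [rs_phi_map hΦinv t ω, Measure.map_apply (rs_msub t) hms]
      congr 1
      ext v
      simp only [Set.mem_preimage, Set.mem_setOf_eq]
      rw [rs_theta_comp hθ, sub_add_cancel]
    calc ∫⁻ ω, Φ ω {u | θ u ω ∈ A ∧ u ∈ (fun u => u - t) ⁻¹' D} ∂P
        = ∫⁻ ω, Φ (θ t ω) {u | θ u (θ t ω) ∈ A ∧ u ∈ D} ∂P :=
          lintegral_congr fun ω => (key ω).symm
      _ = ∫⁻ ω, Φ ω {u | θ u ω ∈ A ∧ u ∈ D} ∂P := by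
          conv_rhs => rw [← hPθ t]
          rw [lintegral_map (hsec A hA D hD) (rs_theta_meas hθ t)]
  -- identification with the Palm measure on cylinders over the unit cube
  have hpalm : ∀ (A : Set Ω), MeasurableSet A → m (A ×ˢ unitCube d) = γ * P0 A := by
    intro A hA
    rw [happ A hA _ rs_measurableSet_unitCube, hP0.2 A hA]
    refine lintegral_congr fun ω => ?_
    have hpre : MeasurableSet ((fun x : Euc d => θ x ω) ⁻¹' A) :=
      (hθm.comp (measurable_id.prodMk measurable_const)) hA
    have h1 : ∀ x : Euc d, A.indicator (fun _ => (1:ℝ≥0∞)) (θ x ω)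
        = ((fun x : Euc d => θ x ω) ⁻¹' A).indicator (fun _ => (1:ℝ≥0∞)) x := by
      intro x
      by_cases hx : θ x ω ∈ A <;> simp [Set.indicator_apply, hx, Set.mem_preimage]
    calc Φ ω {u | θ u ω ∈ A ∧ u ∈ unitCube d}
        = Φ ω (((fun x : Euc d => θ x ω) ⁻¹' A) ∩ unitCube d) := rfl
      _ = (Φ ω).restrict (unitCube d) ((fun x : Euc d => θ x ω) ⁻¹' A) :=
          (Measure.restrict_apply hpre).symm
      _ = ∫⁻ x in unitCube d, ((fun x : Euc d => θ x ω) ⁻¹' A).indicator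
            (fun _ => (1:ℝ≥0∞)) x ∂(Φ ω) := by
          rw [lintegral_indicator hpre, setLIntegral_one]
      _ = ∫⁻ x in unitCube d, A.indicator (fun _ => (1:ℝ≥0∞)) (θ x ω) ∂(Φ ω) := by
          exact lintegral_congr fun x => (h1 x).symm
  -- rectangles in general, via uniqueness of Haar measure
  have hrect : ∀ (A : Set Ω), MeasurableSet A → ∀ (D : Set (Euc d)), MeasurableSet D →
      m (A ×ˢ D) = (γ * P0 A) * volume D := by
    intro A hA
    set mA : Measure (Euc d) := Measure.map Prod.snd (m.restrict (A ×ˢ Set.univ)) with hmA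
    have hmA_apply : ∀ D : Set (Euc d), MeasurableSet D → mA D = m (A ×ˢ D) := by
      intro D hD
      rw [hmA, Measure.map_apply measurable_snd hD,
          Measure.restrict_apply (measurable_snd hD)]
      congr 1
      ext p
      simp [Set.mem_prod]
      tauto
    haveI : mA.IsAddLeftInvariant := by
      constructor
      intro t
      refine Measure.ext fun D hD => ?_
      rw [Measure.map_apply (measurable_const_add t) hD,
          hmA_apply _ ((measurable_const_add t) hD), hmA_apply _ hD]
      have hset : (fun u => t + u) ⁻¹' D = (fun u => u - (-t)) ⁻¹' D := by
        ext u
        simp [sub_neg_eq_add, add_comm]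
      rw [hset]
      exact hshift A hA D hD (-t)
    haveI : IsLocallyFiniteMeasure mA := by
      constructor
      intro x
      set c : Euc d := x - (EuclideanSpace.equiv (Fin d) ℝ).symm (fun _ => (1/2:ℝ)) with hc
      refine ⟨(fun y => y - c) ⁻¹' unitCube d, ?_, ?_⟩
      · -- it is a neighborhood of x
        refine Filter.mem_of_superset (Metric.ball_mem_nhds x (by norm_num : (0:ℝ) < 1/4)) ?_
        intro y hy
        simp only [Set.mem_preimage]
        intro i
        have hco : dist (y i) (x i) ≤ dist y x := by
          have h1 : dist (y i) (x i) = Real.sqrt (dist (y i) (x i)^2) :=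
            (Real.sqrt_sq dist_nonneg).symm
          rw [h1, EuclideanSpace.dist_eq]
          exact Real.sqrt_le_sqrt
            (Finset.single_le_sum (f := fun j => dist (y j) (x j)^2)
              (fun j _ => sq_nonneg _) (Finset.mem_univ i))
        have hy' : dist y x < 1/4 := Metric.mem_ball.1 hy
        have hval : (y - c) i = y i - x i + 1/2 := by
          rw [hc]
          have : (y - (x - (EuclideanSpace.equiv (Fin d) ℝ).symm (fun _ => (1/2:ℝ)))) i
              = y i - (x i - 1/2) := rfl
          rw [this]
          ring
        rw [hval]
        have habs : |y i - x i| < 1/4 := by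
          rw [← Real.dist_eq]
          exact lt_of_le_of_lt hco hy'
        constructor
        · cases' abs_lt.1 habs with h1 h2
          linarith
        · cases' abs_lt.1 habs with h1 h2
          linarith
      · -- finite measure
        have h1 : mA ((fun y => y - c) ⁻¹' unitCube d)
            = m (A ×ˢ ((fun y => y - c) ⁻¹' unitCube d)) :=
          hmA_apply _ ((rs_msub c) rs_measurableSet_unitCube)
        rw [h1]
        calc m (A ×ˢ ((fun y => y - c) ⁻¹' unitCube d))
            ≤ m (Set.univ ×ˢ ((fun y => y - c) ⁻¹' unitCube d)) :=
              measure_mono (Set.prod_mono (Set.subset_univ A) subset_rfl)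
          _ = m (Set.univ ×ˢ unitCube d) :=
              hshift Set.univ MeasurableSet.univ _ rs_measurableSet_unitCube c
          _ = γ * P0 Set.univ := hpalm Set.univ MeasurableSet.univ
          _ < ⊤ := by
              rw [measure_univ, mul_one]
              exact hγfin
    intro D hD
    have heq : mA = mA.addHaarScalarFactor volume • volume :=
      Measure.isAddLeftInvariant_eq_smul mA volume
    have hval : ((mA.addHaarScalarFactor volume : ℝ≥0) : ℝ≥0∞) = γ * P0 A := by
      have h1 : mA (unitCube d) = γ * P0 A := by
        rw [hmA_apply _ rs_measurableSet_unitCube]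
        exact hpalm A hA
      rw [heq] at h1
      rw [Measure.smul_apply, rs_volume_unitCube, ENNReal.smul_def, smul_eq_mul, mul_one] at h1
      exact h1
    rw [← hmA_apply D hD, heq, Measure.smul_apply, ENNReal.smul_def, hval, smul_eq_mul]
  -- conclude: m is the product measure
  set γn : ℝ≥0 := γ.toNNReal with hγn
  have hγnc : (γn : ℝ≥0∞) = γ := ENNReal.coe_toNNReal hγfin.ne
  have hsmul : (γn • P0 : Measure Ω) = ((γn : ℝ≥0∞) • P0 : Measure Ω) := by
    refine Measure.ext fun s hs => ?_
    rw [Measure.smul_apply, Measure.smul_apply, ENNReal.smul_def]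
  have hprod : (γn • P0).prod (volume : Measure (Euc d)) = m := by
    apply Measure.prod_eq
    intro s t hs ht
    rw [hrect s hs t ht, hsmul, Measure.smul_apply, smul_eq_mul, hγnc]
  calc ∫⁻ ω, ∫⁻ u, F (θ u ω) u ∂(Φ ω) ∂P
      = ∫⁻ p : Ω × Euc d, F p.1 p.2 ∂m := by
        rw [hm, Measure.lintegral_bind hbm.aemeasurable hF.aemeasurable]
        refine lintegral_congr fun ω => ?_
        rw [lintegral_map hF (hgω ω)]
    _ = ∫⁻ p : Ω × Euc d, F p.1 p.2 ∂((γn • P0).prod volume) := by rw [hprod]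
    _ = ∫⁻ ω, ∫⁻ u, F ω u ∂(volume : Measure (Euc d)) ∂(γn • P0) :=
        lintegral_prod _ hF.aemeasurable
    _ = γ * ∫⁻ ω, ∫⁻ u, F ω u ∂(volume : Measure (Euc d)) ∂P0 := by
        rw [hsmul, lintegral_smul_measure, hγnc, smul_eq_mul]

end RSCampbell
section RSMore

variable {d : ℕ}

lemma rs_norm_le_of_mem_cube {x : Euc d} (hx : x ∈ unitCube d) : ‖x‖ ≤ (d:ℝ) := by
  rw [EuclideanSpace.norm_eq]
  have h1 : ∑ i, ‖x i‖^2 ≤ (d:ℝ) := by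
    calc ∑ i, ‖x i‖^2 ≤ ∑ _i : Fin d, (1:ℝ) := by
          refine Finset.sum_le_sum fun i _ => ?_
          have h := hx i
          have habs : |x i| ≤ 1 := abs_le.2 ⟨by linarith [h.1], h.2⟩
          calc ‖x i‖^2 = |x i|^2 := by rw [Real.norm_eq_abs]
            _ ≤ 1 := by nlinarith [abs_nonneg (x i)]
      _ = d := by simp
  have h2 : Real.sqrt (∑ i, ‖x i‖^2) ≤ Real.sqrt d := Real.sqrt_le_sqrt h1
  have h3 : Real.sqrt d ≤ d := by
    rcases Nat.eq_zero_or_pos d with h | h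
    · subst h; simp
    · have hd1 : (1:ℝ) ≤ d := by exact_mod_cast h
      have hsq : (d:ℝ) ≤ (d:ℝ)^2 := by nlinarith
      calc Real.sqrt d ≤ Real.sqrt ((d:ℝ)^2) := Real.sqrt_le_sqrt hsq
        _ = d := Real.sqrt_sq (by positivity)
  linarith

end RSMore
/-- Lemma: Palm representations of the reduced second moment measure of a transported
random measure. -/
theorem reduced_second_moment_of_transport
    {d : ℕ} {Ω : Type} [MeasurableSpace Ω]
    (P : Measure Ω) [IsProbabilityMeasure P]
    (θ : Euc d → Ω → Ω) (hθ : IsFlow θ)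
    (hPθ : ∀ x : Euc d, Measure.map (θ x) P = P)
    (Φ : Ω → Measure (Euc d)) (hΦm : Measurable Φ)
    (hΦlf : ∀ ω, IsLocallyFiniteMeasure (Φ ω))
    (hΦinv : InvariantRM θ Φ)
    (γ : ℝ≥0∞) (hγ0 : 0 < γ) (hγfin : γ < ⊤) (hγ : HasIntensity P Φ γ)
    (P0 : Measure Ω) (hP0 : IsPalm P θ Φ γ P0)
    (K : Ω → Euc d → Measure (Euc d)) (hK : IsInvariantKernel θ K)
    (αK : Measure (Euc d)) (hαK : IsReducedSecondMoment P (transported K Φ) αK) :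
    (∀ B : Set (Euc d), MeasurableSet B →
        αK B = γ * ∫⁻ ω, ∫⁻ y, tconv (K ω y) (K ω 0) B ∂(Φ ω) ∂P0) ∧
    (LocSqInt P Φ →
      ∀ α : Measure (Euc d), IsReducedSecondMoment P Φ α →
      ∀ P2 : Euc d → Measure Ω, IsTwoPointPalm P θ Φ α P2 →
      ∀ B : Set (Euc d), MeasurableSet B →
        αK B = ∫⁻ y, ∫⁻ ω, tconv (K ω y) (K ω 0) B ∂(P2 y) ∂α) := by
  classical
  have hθm := hθ.1
  have hKm := hK.1
  have hKp := hK.2.1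
  have hC : MeasurableSet (unitCube d) := rs_measurableSet_unitCube
  have hKc : ∀ ω, Measurable (K ω) := fun ω =>
    hKm.comp (measurable_const.prodMk measurable_id)
  -- a common first step for both parts
  have hstep1 : ∀ B : Set (Euc d), MeasurableSet B →
      αK B = ∫⁻ ω, ∫⁻ u, (∫⁻ z, (unitCube d).indicator (fun _ => (1:ℝ≥0∞)) (z + u)
        * transported K Φ (θ z (θ u ω)) B ∂(K (θ u ω) 0)) ∂(Φ ω) ∂P := by
    intro B hB
    have hGm : Measurable fun ω => transported K Φ ω B := rs_G_meas hΦm hΦlf hKm hB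
    have hGx : ∀ (ω : Ω) (x : Euc d), transported K Φ ω ((fun y => y - x) ⁻¹' B)
        = transported K Φ (θ x ω) B := by
      intro ω x
      rw [rs_transported_map hθ hΦinv hK x ω, Measure.map_apply (rs_msub x) hB]
    have hind : ∀ ω : Ω, Measurable fun x : Euc d =>
        (unitCube d).indicator (fun x => transported K Φ (θ x ω) B) x := fun ω =>
      ((hGm.comp (hθm.comp (measurable_id.prodMk measurable_const)))).indicator hC
    rw [hαK B hB]
    refine lintegral_congr fun ω => ?_
    calc ∫⁻ x in unitCube d, transported K Φ ω ((fun y => y - x) ⁻¹' B)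
          ∂(transported K Φ ω)
        = ∫⁻ x, (unitCube d).indicator (fun x => transported K Φ (θ x ω) B) x
            ∂(transported K Φ ω) := by
          rw [lintegral_indicator hC]
          exact setLIntegral_congr_fun hC (fun x _ => hGx ω x)
      _ = ∫⁻ u, ∫⁻ x, (unitCube d).indicator (fun x => transported K Φ (θ x ω) B) x
            ∂(K ω u) ∂(Φ ω) :=
          Measure.lintegral_bind (hKc ω).aemeasurable (hind ω).aemeasurable
      _ = ∫⁻ u, ∫⁻ z, (unitCube d).indicator (fun x => transported K Φ (θ x ω) B) (z + u)
            ∂(K (θ u ω) 0) ∂(Φ ω) := by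
          refine lintegral_congr fun u => ?_
          rw [rs_K_map hK ω u, lintegral_map (hind ω) (rs_madd u)]
      _ = ∫⁻ u, ∫⁻ z, (unitCube d).indicator (fun _ => (1:ℝ≥0∞)) (z + u)
            * transported K Φ (θ z (θ u ω)) B ∂(K (θ u ω) 0) ∂(Φ ω) := by
          refine lintegral_congr fun u => lintegral_congr fun z => ?_
          rw [rs_theta_comp hθ]
          by_cases hzu : z + u ∈ unitCube d
          · simp [Set.indicator_of_mem hzu]
          · simp [Set.indicator_of_notMem hzu]
  constructor
  · -- Part 1
    intro B hB
    have hGm : Measurable fun ω => transported K Φ ω B := rs_G_meas hΦm hΦlf hKm hB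
    set G : Ω → ℝ≥0∞ := fun ω => transported K Φ ω B with hGdef
    set F : Ω → Euc d → ℝ≥0∞ := fun ω u =>
      ∫⁻ z, (unitCube d).indicator (fun _ => (1:ℝ≥0∞)) (z + u) * G (θ z ω) ∂(K ω 0)
      with hFdef
    have h1 : αK B = ∫⁻ ω, ∫⁻ u, F (θ u ω) u ∂(Φ ω) ∂P := by
      rw [hstep1 B hB]
    have hFm : Measurable fun p : Ω × Euc d => F p.1 p.2 := by
      simp only [hFdef]
      let κ : ProbabilityTheory.Kernel (Ω × Euc d) (Euc d) :=
        ProbabilityTheory.Kernel.mk (fun p : Ω × Euc d => K p.1 0)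
          (hKm.comp (measurable_fst.prodMk measurable_const))
      haveI : ProbabilityTheory.IsMarkovKernel κ := ⟨fun p => hKp p.1 0⟩
      have hint : Measurable (Function.uncurry fun (p : Ω × Euc d) (z : Euc d) =>
          (unitCube d).indicator (fun _ => (1:ℝ≥0∞)) (z + p.2) * G (θ z p.1)) := by
        apply Measurable.mul
        · exact (measurable_const.indicator hC).comp
            (measurable_snd.add (measurable_fst.snd))
        · exact hGm.comp (hθm.comp (measurable_snd.prodMk (measurable_fst.fst)))
      exact Measurable.lintegral_kernel_prod_right (κ := κ) hint
    rw [h1, rs_campbell hθ hPθ hΦm hΦlf hΦinv hγfin hP0 F hFm]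
    congr 1
    refine lintegral_congr fun ω => ?_
    haveI := hKp ω 0
    haveI := hΦlf ω
    have hswap : ∫⁻ u, F ω u ∂(volume : Measure (Euc d))
        = ∫⁻ z, G (θ z ω) ∂(K ω 0) := by
      simp only [hFdef]
      rw [lintegral_lintegral_swap
        ((((measurable_const.indicator hC).comp (measurable_snd.add measurable_fst)).mul
          (hGm.comp (hθm.comp (measurable_snd.prodMk measurable_const)))).aemeasurable)]
      refine lintegral_congr fun z => ?_
      rw [lintegral_mul_const _
        (show Measurable fun u : Euc d =>
            (unitCube d).indicator (fun _ => (1:ℝ≥0∞)) (z + u) from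
          (measurable_const.indicator hC).comp (measurable_const_add z)),
        rs_cube_int, one_mul]
    have hfin2 : ∫⁻ z, G (θ z ω) ∂(K ω 0)
        = ∫⁻ v, tconv (K ω v) (K ω 0) B ∂(Φ ω) := by
      have e1 : ∀ z : Euc d, G (θ z ω)
          = ∫⁻ v, K ω v ((fun y => y - z) ⁻¹' B) ∂(Φ ω) := by
        intro z
        simp only [hGdef]
        rw [rs_transported_map hθ hΦinv hK z ω, Measure.map_apply (rs_msub z) hB]
        exact Measure.bind_apply ((rs_msub z) hB) (hKc ω).aemeasurable
      simp_rw [e1]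
      rw [lintegral_lintegral_swap
        ((rs_K_pre_meas hKm hKp measurable_const measurable_snd measurable_fst hB).aemeasurable)]
      refine lintegral_congr fun v => ?_
      haveI := hKp ω v
      show _ = (Measure.map (fun p : Euc d × Euc d => p.1 - p.2) ((K ω v).prod (K ω 0))) B
      rw [Measure.map_apply (show Measurable (fun p : Euc d × Euc d => p.1 - p.2) from
            measurable_fst.sub measurable_snd) hB,
          Measure.prod_apply_symm ((show Measurable (fun p : Euc d × Euc d => p.1 - p.2) from
            measurable_fst.sub measurable_snd) hB)]
      rfl
    rw [hswap, hfin2]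
  · -- Part 2
    intro hsq α hα P2 hP2 B hB
    -- α is locally finite, hence σ-finite
    have hcb : ∀ R : ℝ, 0 ≤ R → α (Metric.closedBall (0:Euc d) R) < ⊤ := by
      intro R hR
      have hmeq := hα (Metric.closedBall 0 R) measurableSet_closedBall
      have hbd : ∀ ω, (∫⁻ x in unitCube d,
            Φ ω ((fun y => y - x) ⁻¹' Metric.closedBall 0 R) ∂(Φ ω))
          ≤ Φ ω (Metric.closedBall 0 (R + d)) ^ 2 := by
        intro ω
        have hsub : unitCube d ⊆ Metric.closedBall (0:Euc d) (R + d) := by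
          intro x hx
          rw [Metric.mem_closedBall, dist_zero_right]
          linarith [rs_norm_le_of_mem_cube hx]
        calc (∫⁻ x in unitCube d,
              Φ ω ((fun y => y - x) ⁻¹' Metric.closedBall 0 R) ∂(Φ ω))
            ≤ ∫⁻ _x in unitCube d, Φ ω (Metric.closedBall 0 (R + d)) ∂(Φ ω) := by
              refine setLIntegral_mono' hC fun x hx => measure_mono fun y hy => ?_
              rw [Set.mem_preimage, Metric.mem_closedBall, dist_zero_right] at hy
              rw [Metric.mem_closedBall, dist_zero_right]
              have hny : ‖y‖ ≤ ‖y - x‖ + ‖x‖ := by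
                have := norm_add_le (y - x) x
                simpa using this
              have hxn := rs_norm_le_of_mem_cube hx
              linarith
          _ = Φ ω (Metric.closedBall 0 (R+d)) * Φ ω (unitCube d) :=
              setLIntegral_const _ _
          _ ≤ Φ ω (Metric.closedBall 0 (R+d)) * Φ ω (Metric.closedBall 0 (R+d)) :=
              mul_le_mul_right (measure_mono hsub) _
          _ = Φ ω (Metric.closedBall 0 (R+d)) ^ 2 := (pow_two _).symm
      calc α (Metric.closedBall 0 R)
          ≤ ∫⁻ ω, Φ ω (Metric.closedBall 0 (R+d)) ^ 2 ∂P := by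
            rw [hmeq]; exact lintegral_mono hbd
        _ < ⊤ := hsq _ measurableSet_closedBall Metric.isBounded_closedBall
    haveI : IsLocallyFiniteMeasure α := by
      constructor
      intro x
      refine ⟨Metric.closedBall x 1, Metric.closedBall_mem_nhds x one_pos, ?_⟩
      refine lt_of_le_of_lt (measure_mono ?_) (hcb (‖x‖ + 1) (by positivity))
      refine Metric.closedBall_subset_closedBall' ?_
      rw [dist_zero_right]
      linarith
    -- the kernel function for the two-point Palm formula
    set f : Euc d → Euc d → Ω → ℝ≥0∞ := fun u y ω =>
      ∫⁻ z, (unitCube d).indicator (fun _ => (1:ℝ≥0∞)) (z + u)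
        * K ω y ((fun w => w - z) ⁻¹' B) ∂(K ω 0) with hfdef
    have hfm : Measurable fun p : Euc d × Euc d × Ω => f p.1 p.2.1 p.2.2 := by
      simp only [hfdef]
      let κ : ProbabilityTheory.Kernel (Euc d × Euc d × Ω) (Euc d) :=
        ProbabilityTheory.Kernel.mk (fun p : Euc d × Euc d × Ω => K p.2.2 0)
          (hKm.comp ((measurable_snd.snd).prodMk measurable_const))
      haveI : ProbabilityTheory.IsMarkovKernel κ := ⟨fun p => hKp p.2.2 0⟩
      have hint : Measurable (Function.uncurry fun (p : Euc d × Euc d × Ω) (z : Euc d) =>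
          (unitCube d).indicator (fun _ => (1:ℝ≥0∞)) (z + p.1)
            * K p.2.2 p.2.1 ((fun w => w - z) ⁻¹' B)) := by
        apply Measurable.mul
        · exact (measurable_const.indicator hC).comp
            (measurable_snd.add (measurable_fst.fst))
        · exact rs_K_pre_meas hKm hKp (measurable_fst.snd.snd) (measurable_fst.snd.fst)
            measurable_snd hB
      exact Measurable.lintegral_kernel_prod_right (κ := κ) hint
    have hstepA : αK B = ∫⁻ ω, ∫⁻ u, ∫⁻ v, f u (v - u) (θ u ω) ∂(Φ ω) ∂(Φ ω) ∂P := by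
      rw [hstep1 B hB]
      refine lintegral_congr fun ω => lintegral_congr fun u => ?_
      haveI := hKp (θ u ω) 0
      haveI := hΦlf ω
      have e1 : ∀ z : Euc d, transported K Φ (θ z (θ u ω)) B
          = ∫⁻ v, K (θ u ω) (v - u) ((fun w => w - z) ⁻¹' B) ∂(Φ ω) := by
        intro z
        rw [rs_theta_comp hθ]
        rw [rs_transported_map hθ hΦinv hK (z+u) ω, Measure.map_apply (rs_msub (z+u)) hB]
        have hba : transported K Φ ω ((fun y => y - (z+u)) ⁻¹' B)
            = ∫⁻ v, K ω v ((fun y => y - (z+u)) ⁻¹' B) ∂(Φ ω) :=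
          Measure.bind_apply ((rs_msub (z+u)) hB) (hKc ω).aemeasurable
        rw [hba]
        refine lintegral_congr fun v => ?_
        have hsets : (fun y : Euc d => y - (z+u)) ⁻¹' B
            = (fun y => y - u) ⁻¹' ((fun w => w - z) ⁻¹' B) := by
          ext y
          simp only [Set.mem_preimage]
          rw [sub_sub, add_comm u z]
        rw [hsets]
        exact rs_K_pt hθ hK ω u v ((rs_msub z) hB)
      simp_rw [e1]
      have e2 : ∀ z : Euc d, (unitCube d).indicator (fun _ => (1:ℝ≥0∞)) (z + u)
            * ∫⁻ v, K (θ u ω) (v - u) ((fun w => w - z) ⁻¹' B) ∂(Φ ω)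
          = ∫⁻ v, (unitCube d).indicator (fun _ => (1:ℝ≥0∞)) (z + u)
            * K (θ u ω) (v - u) ((fun w => w - z) ⁻¹' B) ∂(Φ ω) := fun z =>
        (lintegral_const_mul' _ _ (rs_ind_ne_top _ _)).symm
      simp_rw [e2]
      rw [lintegral_lintegral_swap
        ((((measurable_const.indicator hC).comp (measurable_fst.add measurable_const)).mul
          (rs_K_pre_meas hKm hKp measurable_const (measurable_snd.sub measurable_const)
            measurable_fst hB)).aemeasurable)]
    rw [hstepA, hP2.2.2 f hfm]
    have hswap1 : ∫⁻ x, ∫⁻ y, ∫⁻ ω, f x y ω ∂(P2 y) ∂α ∂(volume : Measure (Euc d))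
        = ∫⁻ y, ∫⁻ x, ∫⁻ ω, f x y ω ∂(P2 y) ∂(volume : Measure (Euc d)) ∂α := by
      let κ2 : ProbabilityTheory.Kernel (Euc d × Euc d) Ω :=
        ProbabilityTheory.Kernel.mk (fun q : Euc d × Euc d => P2 q.2)
          (hP2.2.1.comp measurable_snd)
      haveI : ProbabilityTheory.IsMarkovKernel κ2 := ⟨fun q => hP2.1 q.2⟩
      have hh : Measurable (Function.uncurry fun (q : Euc d × Euc d) (ω : Ω) =>
          f q.1 q.2 ω) :=
        hfm.comp ((measurable_fst.fst).prodMk ((measurable_fst.snd).prodMk measurable_snd))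
      exact lintegral_lintegral_swap
        (Measurable.lintegral_kernel_prod_right (κ := κ2) hh).aemeasurable
    rw [hswap1]
    refine lintegral_congr fun y => ?_
    haveI := hP2.1 y
    have hswap2 : ∫⁻ x, ∫⁻ ω, f x y ω ∂(P2 y) ∂(volume : Measure (Euc d))
        = ∫⁻ ω, ∫⁻ x, f x y ω ∂(volume : Measure (Euc d)) ∂(P2 y) :=
      lintegral_lintegral_swap
        (hfm.comp ((measurable_fst).prodMk (measurable_const.prodMk measurable_snd))).aemeasurable
    rw [hswap2]
    refine lintegral_congr fun ω => ?_
    haveI := hKp ω 0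
    haveI := hKp ω y
    simp only [hfdef]
    rw [lintegral_lintegral_swap
      ((((measurable_const.indicator hC).comp (measurable_snd.add measurable_fst)).mul
        (rs_K_pre_meas hKm hKp measurable_const measurable_const measurable_snd hB)).aemeasurable)]
    have hconst : ∀ z : Euc d, (∫⁻ u, (unitCube d).indicator (fun _ => (1:ℝ≥0∞)) (z + u)
          * K ω y ((fun w => w - z) ⁻¹' B) ∂(volume : Measure (Euc d)))
        = K ω y ((fun w => w - z) ⁻¹' B) := by
      intro z
      rw [lintegral_mul_const _
        (show Measurable fun u : Euc d =>
            (unitCube d).indicator (fun _ => (1:ℝ≥0∞)) (z + u) from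
          (measurable_const.indicator hC).comp (measurable_const_add z)),
        rs_cube_int, one_mul]
    rw [lintegral_congr hconst]
    show _ = (Measure.map (fun p : Euc d × Euc d => p.1 - p.2) ((K ω y).prod (K ω 0))) B
    rw [Measure.map_apply (show Measurable (fun p : Euc d × Euc d => p.1 - p.2) from
          measurable_fst.sub measurable_snd) hB,
        Measure.prod_apply_symm ((show Measurable (fun p : Euc d × Euc d => p.1 - p.2) from
          measurable_fst.sub measurable_snd) hB)]
    rfl
end
end

section
/- Let Φ be a stationary, locally square-integrable random measure on ℝ^d and let L₀ be a Borel probability measure on ℝ^d. Define the smoothed random measure LΦ by LΦ(ω, B) := ∫ Φ(ω, B − y) L₀(dy) for Borel sets B. Then for every bounded Borel set B ⊆ ℝ^d, Var[LΦ(B)] ≤ Var[Φ(B)]. -/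
open MeasureTheory Filter Set ProbabilityTheory
open scoped ENNReal NNReal Topology Pointwise

noncomputable section

/-- A kernel whose every measure is finite is s-finite. -/
lemma aux_isSFinite {α β : Type*} [MeasurableSpace α] [MeasurableSpace β]
    (κ : Kernel α β) (hfin : ∀ a, κ a Set.univ < ⊤) : IsSFiniteKernel κ := by
  classical
  have hE : ∀ m : ℕ, MeasurableSet {a | κ a Set.univ ∈ Set.Ico (m : ℝ≥0∞) (m + 1)} :=
    fun m => (κ.measurable_coe MeasurableSet.univ) measurableSet_Ico
  set seq : ℕ → Kernel α β := fun m => Kernel.piecewise (hE m) κ 0 with hseq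
  have hfin' : ∀ m, IsFiniteKernel (seq m) := by
    intro m
    refine ⟨⟨(m : ℝ≥0∞) + 1, ENNReal.add_lt_top.2 ⟨ENNReal.natCast_lt_top m, ENNReal.one_lt_top⟩,
      fun a => ?_⟩⟩
    rw [hseq]
    simp only [Kernel.piecewise_apply']
    split_ifs with h
    · exact le_of_lt h.2
    · simp
  refine ⟨⟨seq, hfin', ?_⟩⟩
  symm
  ext a s hs
  rw [Kernel.sum_apply' _ _ hs]
  have hv : κ a Set.univ < ⊤ := hfin a
  set m0 : ℕ := ⌊(κ a Set.univ).toReal⌋₊ with hm0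
  have ha : κ a Set.univ ∈ Set.Ico (m0 : ℝ≥0∞) (m0 + 1) := by
    constructor
    · rw [← ENNReal.ofReal_natCast, ← ENNReal.ofReal_toReal hv.ne]
      exact ENNReal.ofReal_le_ofReal (Nat.floor_le ENNReal.toReal_nonneg)
    · rw [← ENNReal.ofReal_toReal hv.ne]
      have h2 : (κ a Set.univ).toReal < (m0 : ℝ) + 1 := Nat.lt_floor_add_one _
      calc ENNReal.ofReal (κ a Set.univ).toReal
          < ENNReal.ofReal ((m0 : ℝ) + 1) :=
            (ENNReal.ofReal_lt_ofReal_iff (by positivity)).2 h2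
        _ = (m0 : ℝ≥0∞) + 1 := by
            rw [ENNReal.ofReal_add (by positivity) zero_le_one]
            simp [ENNReal.ofReal_natCast]
  rw [tsum_eq_single m0 ?_]
  · rw [hseq]; simp only [Kernel.piecewise_apply']
    split_ifs with h
    · rfl
    · exact absurd ha h
  · intro m hm
    rw [hseq]; simp only [Kernel.piecewise_apply']
    split_ifs with h
    · exfalso
      apply hm
      have hmem : (κ a) Set.univ ∈ Set.Ico (m : ℝ≥0∞) (m + 1) := h
      have h1 : (m : ℝ≥0∞) < (m0 : ℝ≥0∞) + 1 := lt_of_le_of_lt hmem.1 ha.2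
      have h2 : (m0 : ℝ≥0∞) < (m : ℝ≥0∞) + 1 := lt_of_le_of_lt ha.1 hmem.2
      have h1' : m < m0 + 1 := by exact_mod_cast h1
      have h2' : m0 < m + 1 := by exact_mod_cast h2
      omega
    · simp

/-- Joint measurability of `(ω, y) ↦ Φ ω {z | z + y ∈ B}`. -/
lemma aux_jointMeas {d : ℕ} {Ω : Type} [MeasurableSpace Ω]
    (Φ : Ω → Measure (Euc d)) (hΦm : Measurable Φ)
    (hΦlf : ∀ ω, IsLocallyFiniteMeasure (Φ ω))
    {B : Set (Euc d)} (hB : MeasurableSet B) :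
    Measurable fun p : Ω × Euc d => Φ p.1 ((fun z => z + p.2) ⁻¹' B) := by
  have hball : ∀ (n : ℕ) (ω), Φ ω (Metric.ball 0 n) < ⊤ := fun n ω => by
    haveI := hΦlf ω
    exact lt_of_le_of_lt (measure_mono Metric.ball_subset_closedBall)
      (isCompact_closedBall (0 : Euc d) n).measure_lt_top
  have key : ∀ n : ℕ, Measurable fun p : Ω × Euc d =>
      Φ p.1 ((fun z => z + p.2) ⁻¹' B ∩ Metric.ball 0 n) := by
    intro n
    set κ : Kernel Ω (Euc d) :=
      ⟨fun ω => (Φ ω).restrict (Metric.ball 0 n), by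
        apply Measure.measurable_of_measurable_coe
        intro s hs
        simp_rw [Measure.restrict_apply hs]
        exact (Measure.measurable_coe (hs.inter measurableSet_ball)).comp hΦm⟩ with hκ
    haveI : IsSFiniteKernel κ := by
      apply aux_isSFinite
      intro ω
      show (Φ ω).restrict (Metric.ball 0 n) Set.univ < ⊤
      rw [Measure.restrict_apply_univ]
      exact hball n ω
    set η : Kernel (Ω × Euc d) (Euc d) := κ.comap Prod.fst measurable_fst with hη
    have ht : MeasurableSet {q : (Ω × Euc d) × Euc d | q.2 + q.1.2 ∈ B} :=
      (measurable_snd.add (measurable_snd.comp measurable_fst)) hB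
    have hmeas := Kernel.measurable_kernel_prodMk_left (κ := η) ht
    have heq : ∀ p : Ω × Euc d,
        η p (Prod.mk p ⁻¹' {q : (Ω × Euc d) × Euc d | q.2 + q.1.2 ∈ B}) =
        Φ p.1 ((fun z => z + p.2) ⁻¹' B ∩ Metric.ball 0 n) := by
      intro p
      have h1 : Prod.mk p ⁻¹' {q : (Ω × Euc d) × Euc d | q.2 + q.1.2 ∈ B} =
          (fun z => z + p.2) ⁻¹' B := rfl
      rw [h1, hη, Kernel.comap_apply]
      show (Φ p.1).restrict (Metric.ball 0 n) _ = _
      rw [Measure.restrict_apply ((measurable_add_const p.2) hB)]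
    simp_rw [heq] at hmeas
    exact hmeas
  have hdecomp : ∀ p : Ω × Euc d, Φ p.1 ((fun z => z + p.2) ⁻¹' B) =
      ⨆ n : ℕ, Φ p.1 ((fun z => z + p.2) ⁻¹' B ∩ Metric.ball 0 n) := by
    intro p
    have hUniv : (⋃ n : ℕ, Metric.ball (0 : Euc d) n) = Set.univ := by
      ext x
      simp only [Set.mem_iUnion, Metric.mem_ball, dist_zero_right, Set.mem_univ, iff_true]
      exact exists_nat_gt ‖x‖
    have hU : (fun z => z + p.2) ⁻¹' B = ⋃ n : ℕ, ((fun z => z + p.2) ⁻¹' B ∩ Metric.ball 0 n) := by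
      rw [← Set.inter_iUnion, hUniv, Set.inter_univ]
    conv_lhs => rw [hU]
    apply Directed.measure_iUnion
    apply Monotone.directed_le
    intro i j hij
    exact Set.inter_subset_inter_right _ (Metric.ball_subset_ball (by exact_mod_cast hij))
  simp_rw [hdecomp]
  exact Measurable.iSup key

/-- Lemma: deterministic smoothing of a stationary locally square-integrable random
measure decreases the variance: `Var[LΦ(B)] ≤ Var[Φ(B)]` for bounded Borel `B`. -/
theorem smoothing_variance_le
    {d : ℕ} {Ω : Type} [MeasurableSpace Ω]
    (P : Measure Ω) [IsProbabilityMeasure P]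
    (Φ : Ω → Measure (Euc d)) (hΦm : Measurable Φ)
    (hΦlf : ∀ ω, IsLocallyFiniteMeasure (Φ ω))
    (hΦstat : StationaryRM P Φ) (hΦsq : LocSqInt P Φ)
    (L0 : Measure (Euc d)) [IsProbabilityMeasure L0] :
    ∀ B : Set (Euc d), MeasurableSet B → Bornology.IsBounded B →
      rVar P (fun ω => (L0.bind (fun y => Measure.map (fun z => z + y) (Φ ω))) B) ≤
        rVar P (fun ω => Φ ω B) := by
  intro B hB hBb
  -- the joint section function
  set f : Ω × Euc d → ℝ≥0∞ := fun p => Φ p.1 ((fun z => z + p.2) ⁻¹' B) with hf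
  have hfm : Measurable f := aux_jointMeas Φ hΦm hΦlf hB
  -- moments of Φ B
  set m1 : ℝ≥0∞ := ∫⁻ ω, Φ ω B ∂P with hm1def
  set m2 : ℝ≥0∞ := ∫⁻ ω, (Φ ω B) ^ 2 ∂P with hm2def
  have hm2 : m2 < ⊤ := hΦsq B hB hBb
  have hm1 : m1 < ⊤ := by
    have hpt : ∀ a : ℝ≥0∞, a ≤ 1 + a ^ 2 := by
      intro a
      rcases le_total a 1 with h | h
      · exact h.trans le_self_add
      · calc a = a * 1 := (mul_one a).symm
          _ ≤ a * a := mul_le_mul_right h a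
          _ = a ^ 2 := (sq a).symm
          _ ≤ 1 + a ^ 2 := le_add_self
    calc m1 ≤ ∫⁻ ω, (1 + (Φ ω B) ^ 2) ∂P := lintegral_mono fun ω => hpt _
      _ = 1 + m2 := by
          rw [lintegral_add_left measurable_const]
          simp [hm2def]
      _ < ⊤ := ENNReal.add_lt_top.2 ⟨ENNReal.one_lt_top, hm2⟩
  -- stationarity: moments of translated evaluations
  have hmom : ∀ (y : Euc d) (k : ℕ),
      ∫⁻ ω, (Φ ω ((fun z => z + y) ⁻¹' B)) ^ k ∂P = ∫⁻ ω, (Φ ω B) ^ k ∂P := by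
    intro y k
    have h1 : Measurable (fun μ : Measure (Euc d) => (μ B) ^ k) :=
      (Measure.measurable_coe hB).pow_const k
    have h2 : Measurable fun ω => Measure.map (fun z => z + y) (Φ ω) :=
      (Measure.measurable_map _ (measurable_add_const y)).comp hΦm
    have h3 := hΦstat (-y)
    have hfun : (fun z : Euc d => z - (-y)) = fun z => z + y := by
      funext z; simp [sub_neg_eq_add]
    rw [hfun] at h3
    calc ∫⁻ ω, (Φ ω ((fun z => z + y) ⁻¹' B)) ^ k ∂P
        = ∫⁻ ω, ((Measure.map (fun z => z + y) (Φ ω)) B) ^ k ∂P := by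
          simp_rw [Measure.map_apply (measurable_add_const y) hB]
      _ = ∫⁻ μ, (μ B) ^ k ∂(Measure.map (fun ω => Measure.map (fun z => z + y) (Φ ω)) P) :=
          (lintegral_map h1 h2).symm
      _ = ∫⁻ μ, (μ B) ^ k ∂(Measure.map Φ P) := by rw [h3]
      _ = ∫⁻ ω, (Φ ω B) ^ k ∂P := lintegral_map h1 hΦm
  -- identify the smoothed measure evaluation
  have hbind : ∀ ω, (L0.bind (fun y => Measure.map (fun z => z + y) (Φ ω))) B =
      ∫⁻ y, f (ω, y) ∂L0 := by
    intro ω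
    haveI := hΦlf ω
    have hmeasy : Measurable fun y : Euc d => Measure.map (fun z => z + y) (Φ ω) := by
      apply Measure.measurable_of_measurable_coe
      intro s hs
      simp_rw [Measure.map_apply (measurable_add_const _) hs]
      have hT : MeasurableSet {q : Euc d × Euc d | q.2 + q.1 ∈ s} :=
        (measurable_snd.add measurable_fst) hs
      exact measurable_measure_prodMk_left hT
    rw [Measure.bind_apply hB hmeasy.aemeasurable]
    simp_rw [Measure.map_apply (measurable_add_const _) hB]
    rfl
  set G : Ω → ℝ≥0∞ := fun ω => ∫⁻ y, f (ω, y) ∂L0 with hG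
  have hGm : Measurable G := hfm.lintegral_prod_right'
  -- Fubini with stationarity: E[G] = m1
  have hEG : ∫⁻ ω, G ω ∂P = m1 := by
    rw [hG]
    have hswap := lintegral_lintegral_swap (μ := P) (ν := L0)
      (f := fun ω y => f (ω, y)) hfm.aemeasurable
    rw [hswap]
    have : ∀ y : Euc d, ∫⁻ ω, f (ω, y) ∂P = m1 := by
      intro y
      simpa using hmom y 1
    simp_rw [this]
    simp
  -- Fubini with stationarity on squares
  have hEf2 : ∫⁻ ω, ∫⁻ y, f (ω, y) ^ 2 ∂L0 ∂P = m2 := by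
    have hswap := lintegral_lintegral_swap (μ := P) (ν := L0)
      (f := fun ω y => f (ω, y) ^ 2) ((hfm.pow_const 2).aemeasurable)
    rw [hswap]
    have : ∀ y : Euc d, ∫⁻ ω, f (ω, y) ^ 2 ∂P = m2 := fun y => hmom y 2
    simp_rw [this]
    simp
  -- Jensen (Cauchy–Schwarz) pointwise in ω
  have hJ : ∀ ω, (G ω) ^ 2 ≤ ∫⁻ y, f (ω, y) ^ 2 ∂L0 := by
    intro ω
    have hFm : AEMeasurable (fun y => f (ω, y)) L0 :=
      (hfm.comp measurable_prodMk_left).aemeasurable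
    have hpq : Real.HolderConjugate 2 2 := ⟨by norm_num, by norm_num, by norm_num⟩
    have hrpow : ∀ a : ℝ≥0∞, a ^ (2 : ℝ) = a ^ (2 : ℕ) := fun a => by
      rw [← ENNReal.rpow_natCast]; norm_num
    have h1 : G ω ≤ (∫⁻ y, f (ω, y) ^ 2 ∂L0) ^ (1 / 2 : ℝ) := by
      have h0 := ENNReal.lintegral_mul_le_Lp_mul_Lq L0 hpq hFm
        (aemeasurable_const : AEMeasurable (fun _ => (1 : ℝ≥0∞)) L0)
      simp only [Pi.mul_apply, mul_one, ENNReal.one_rpow, lintegral_one, measure_univ] at h0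
      simp_rw [hrpow] at h0
      simpa using h0
    calc (G ω) ^ 2 ≤ ((∫⁻ y, f (ω, y) ^ 2 ∂L0) ^ (1 / 2 : ℝ)) ^ 2 := pow_le_pow_left' h1 2
      _ = ∫⁻ y, f (ω, y) ^ 2 ∂L0 := by
          rw [← ENNReal.rpow_natCast _ 2, ← ENNReal.rpow_mul]
          norm_num
  have hEG2 : ∫⁻ ω, (G ω) ^ 2 ∂P ≤ m2 := by
    calc ∫⁻ ω, (G ω) ^ 2 ∂P ≤ ∫⁻ ω, ∫⁻ y, f (ω, y) ^ 2 ∂L0 ∂P := lintegral_mono hJ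
      _ = m2 := hEf2
  have hEG2top : ∫⁻ ω, (G ω) ^ 2 ∂P < ⊤ := lt_of_le_of_lt hEG2 hm2
  -- rewrite the statement
  have hGfun : (fun ω => (L0.bind (fun y => Measure.map (fun z => z + y) (Φ ω))) B) = G :=
    funext hbind
  rw [hGfun]
  -- real-valued conversions
  have hH : Measurable fun ω => Φ ω B := (Measure.measurable_coe hB).comp hΦm
  have hintG1 : ∫ ω, (G ω).toReal ∂P = m1.toReal := by
    rw [integral_toReal hGm.aemeasurable (ae_lt_top hGm (by rw [hEG]; exact hm1.ne)), hEG]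
  have hintG2 : ∫ ω, ((G ω).toReal) ^ 2 ∂P = (∫⁻ ω, (G ω) ^ 2 ∂P).toReal := by
    rw [← integral_toReal ((hGm.pow_const 2).aemeasurable)
      (ae_lt_top (hGm.pow_const 2) hEG2top.ne)]
    simp_rw [ENNReal.toReal_pow]
  have hintH1 : ∫ ω, (Φ ω B).toReal ∂P = m1.toReal := by
    rw [integral_toReal hH.aemeasurable (ae_lt_top hH hm1.ne)]
  have hintH2 : ∫ ω, ((Φ ω B).toReal) ^ 2 ∂P = m2.toReal := by
    rw [hm2def, ← integral_toReal ((hH.pow_const 2).aemeasurable)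
      (ae_lt_top (hH.pow_const 2) (hm2def ▸ hm2.ne))]
    simp_rw [ENNReal.toReal_pow]
  simp only [rVar]
  rw [hintG1, hintG2, hintH1, hintH2]
  apply sub_le_sub_right
  exact ENNReal.toReal_mono hm2.ne hEG2
end
end

section
/- Let (Ω, 𝒜) be a standard Borel space carrying a measurable flow θ and a stationary probability measure P, and let T be an invariant random transport on ℝ^d (T(ω, · × ℝ^d) locally finite, T(ω, (B + x) × (C + x)) = T(θ_x ω, B × C)) such that Φ := T(·, · × ℝ^d) has finite intensity γ. Then the random measure Ψ := T(·, ℝ^d × ·) is P-almost surely locally finite, and Ψ has intensity γ, i.e. E[T(ℝ^d × B)] = γ λ_d(B) for every Borel set B ⊆ ℝ^d. -/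
open MeasureTheory Filter Set ProbabilityTheory
open scoped ENNReal NNReal Topology Pointwise

noncomputable section

/-! ### Auxiliary lemmas -/

section Aux

open Metric

lemma euc_apply_measurable {d : ℕ} (i : Fin d) : Measurable (fun x : Euc d => x i) :=
  (measurable_pi_apply i).comp (MeasurableEquiv.toLp 2 (Fin d → ℝ)).symm.measurable

lemma cubeIco_measurableSet (d : ℕ) : MeasurableSet (cubeIco d) := by
  have : cubeIco d = ⋂ i, (fun x : Euc d => x i) ⁻¹' Ico (0 : ℝ) 1 := by
    ext x; simp [cubeIco]
  rw [this]
  exact MeasurableSet.iInter fun i => (euc_apply_measurable i) measurableSet_Ico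

lemma unitCube_measurableSet (d : ℕ) : MeasurableSet (unitCube d) := by
  have : unitCube d = ⋂ i, (fun x : Euc d => x i) ⁻¹' Icc (0 : ℝ) 1 := by
    ext x; simp [unitCube]
  rw [this]
  exact MeasurableSet.iInter fun i => (euc_apply_measurable i) measurableSet_Icc

lemma cubeIco_subset_unitCube (d : ℕ) : cubeIco d ⊆ unitCube d := fun x hx i =>
  ⟨(hx i).1, (hx i).2.le⟩

lemma volume_cubeIco (d : ℕ) : volume (cubeIco d) = 1 := by
  have h : cubeIco d =
      (MeasurableEquiv.toLp 2 (Fin d → ℝ)).symm ⁻¹' (univ.pi fun _ => Ico (0:ℝ) 1) := by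
    ext x
    simp only [Set.mem_preimage, Set.mem_univ_pi]
    exact Iff.rfl
  rw [h, (EuclideanSpace.volume_preserving_symm_measurableEquiv_toLp (Fin d)).measure_preimage
    (MeasurableSet.univ_pi fun _ => measurableSet_Ico).nullMeasurableSet,
    volume_pi_pi]
  simp [Real.volume_Ico]

lemma volume_unitCube (d : ℕ) : volume (unitCube d) = 1 := by
  have h : unitCube d =
      (MeasurableEquiv.toLp 2 (Fin d → ℝ)).symm ⁻¹' (univ.pi fun _ => Icc (0:ℝ) 1) := by
    ext x
    simp only [Set.mem_preimage, Set.mem_univ_pi]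
    exact Iff.rfl
  rw [h, (EuclideanSpace.volume_preserving_symm_measurableEquiv_toLp (Fin d)).measure_preimage
    (MeasurableSet.univ_pi fun _ => measurableSet_Icc).nullMeasurableSet,
    volume_pi_pi]
  simp [Real.volume_Icc]

lemma latticePt_apply {d : ℕ} (z : Fin d → ℤ) (i : Fin d) :
    latticePt d z i = (z i : ℝ) := rfl

lemma latticePt_neg {d : ℕ} (z : Fin d → ℤ) : latticePt d (-z) = -latticePt d z := by
  ext i
  show ((-z) i : ℝ) = -(latticePt d z i)
  simp [latticePt_apply]

lemma euc_abs_apply_le_norm {d : ℕ} (x : Euc d) (i : Fin d) : |x i| ≤ ‖x‖ := by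
  rw [EuclideanSpace.norm_eq]
  have h1 : |x i| = Real.sqrt (|x i| ^ 2) := (Real.sqrt_sq (abs_nonneg _)).symm
  rw [h1]
  apply Real.sqrt_le_sqrt
  have := Finset.single_le_sum (f := fun j => ‖x j‖ ^ 2)
    (fun j _ => sq_nonneg _) (Finset.mem_univ i)
  simpa [Real.norm_eq_abs, sq_abs] using this

/-- Membership in the translated half-open cube is determined by floors. -/
lemma mem_cube_iff_floor {d : ℕ} (y : Euc d) (z : Fin d → ℤ) :
    y ∈ (fun u => u - latticePt d z) ⁻¹' cubeIco d ↔ (∀ i, ⌊y i⌋ = z i) := by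
  constructor
  · intro hy i
    have h : y i - (z i : ℝ) ∈ Ico (0 : ℝ) 1 := hy i
    obtain ⟨h1, h2⟩ := h
    rw [Int.floor_eq_iff]
    constructor
    · linarith
    · push_cast; linarith
  · intro hz i
    show y i - (z i : ℝ) ∈ Ico (0 : ℝ) 1
    rw [show ((z i : ℝ)) = ((⌊y i⌋ : ℤ) : ℝ) by rw [hz i]]
    refine ⟨sub_nonneg.2 (Int.floor_le _), ?_⟩
    have := Int.lt_floor_add_one (y i)
    simp only [sub_lt_iff_lt_add]
    linarith

lemma cube_cover {d : ℕ} :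
    (⋃ z : Fin d → ℤ, (fun u : Euc d => u - latticePt d z) ⁻¹' cubeIco d) = univ := by
  ext y
  simp only [mem_iUnion, mem_univ, iff_true]
  exact ⟨fun i => ⌊y i⌋, (mem_cube_iff_floor y _).2 fun i => rfl⟩

lemma cube_disjoint {d : ℕ} :
    Pairwise (Function.onFun Disjoint
      fun z : Fin d → ℤ => (fun u : Euc d => u - latticePt d z) ⁻¹' cubeIco d) := by
  intro a b hab
  rw [Function.onFun, Set.disjoint_left]
  intro y hya hyb
  apply hab
  funext i
  rw [← (mem_cube_iff_floor y a).1 hya i, ← (mem_cube_iff_floor y b).1 hyb i]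

/-- A translation-invariant measure on `ℝ^d` which is finite on the half-open unit
cube is a multiple of Lebesgue measure. -/
lemma invariant_eq_smul_volume {d : ℕ} (ρ : Measure (Euc d))
    (hinv : ∀ (x : Euc d) (B : Set (Euc d)), MeasurableSet B →
      ρ ((fun y => y - x) ⁻¹' B) = ρ B)
    (hfin : ρ (cubeIco d) < ⊤) {B : Set (Euc d)} (hB : MeasurableSet B) :
    ρ B = ρ (cubeIco d) * volume B := by
  haveI : ρ.IsAddLeftInvariant := by
    constructor
    intro x
    ext C hC
    rw [Measure.map_apply (measurable_const_add x) hC]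
    have h : (fun y => x + y) ⁻¹' C = (fun y => y - (-x)) ⁻¹' C := by
      ext y; simp [sub_neg_eq_add, add_comm]
    rw [h]
    exact hinv _ _ hC
  haveI : IsFiniteMeasureOnCompacts ρ := by
    constructor
    intro K hK
    obtain ⟨r, hr⟩ := hK.isBounded.subset_closedBall (0 : Euc d)
    set N : ℕ := ⌈r⌉₊ with hN
    set s : Finset (Fin d → ℤ) :=
      Fintype.piFinset (fun _ => Finset.Icc (-(N:ℤ) - 1) ((N:ℤ) + 1)) with hs
    have hcov : K ⊆ ⋃ z ∈ s, (fun u : Euc d => u - latticePt d z) ⁻¹' cubeIco d := by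
      intro x hx
      have hxr : ‖x‖ ≤ r := by simpa using hr hx
      have hmem1 : (fun i => ⌊x i⌋) ∈ s := by
        rw [hs, Fintype.mem_piFinset]
        intro i
        have h1 : |x i| ≤ (N : ℝ) := le_trans (le_trans (euc_abs_apply_le_norm x i) hxr)
          (Nat.le_ceil r)
        rw [abs_le] at h1
        rw [Finset.mem_Icc]
        constructor
        · have hlow : (-(N:ℤ)) ≤ ⌊x i⌋ := by
            rw [Int.le_floor]; push_cast; linarith [h1.1]
          omega
        · have hup : ⌊x i⌋ ≤ ⌊(N : ℝ)⌋ := Int.floor_mono h1.2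
          rw [Int.floor_natCast] at hup
          omega
      exact Set.mem_biUnion hmem1 ((mem_cube_iff_floor x _).2 fun i => rfl)
    calc ρ K ≤ ρ (⋃ z ∈ s, (fun u : Euc d => u - latticePt d z) ⁻¹' cubeIco d) :=
          measure_mono hcov
      _ ≤ ∑ z ∈ s, ρ ((fun u : Euc d => u - latticePt d z) ⁻¹' cubeIco d) :=
          measure_biUnion_finset_le s _
      _ < ⊤ := by
          apply ENNReal.sum_lt_top.2
          intro z _
          rw [hinv _ _ (cubeIco_measurableSet d)]
          exact hfin
  have h1 : ρ = (Measure.addHaarScalarFactor ρ volume : ℝ≥0) • (volume : Measure (Euc d)) :=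
    Measure.isAddLeftInvariant_eq_smul ρ volume
  have h2 : ρ (cubeIco d) = (Measure.addHaarScalarFactor ρ volume : ℝ≥0∞) := by
    conv_lhs => rw [h1]
    rw [Measure.smul_apply, volume_cubeIco, ENNReal.smul_def, smul_eq_mul, mul_one]
  conv_lhs => rw [h1]
  rw [h2, Measure.smul_apply, ENNReal.smul_def, smul_eq_mul]

end Aux

/-- Proposition: for an invariant random transport whose source has finite intensity `γ`,
the destination is almost surely locally finite and has intensity `γ`. -/
theorem transport_destination_intensity
    {d : ℕ} {Ω : Type} [MeasurableSpace Ω] [StandardBorelSpace Ω]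
    (P : Measure Ω) [IsProbabilityMeasure P]
    (θ : Euc d → Ω → Ω) (hθ : IsFlow θ)
    (hPθ : ∀ x : Euc d, Measure.map (θ x) P = P)
    (T : Ω → Measure (Euc d × Euc d)) (hTm : Measurable T)
    (hTlf : ∀ ω, IsLocallyFiniteMeasure (Measure.map Prod.fst (T ω)))
    (hTinv : ∀ ω (x : Euc d) (B C : Set (Euc d)), MeasurableSet B → MeasurableSet C →
      T ω (((fun y => y - x) ⁻¹' B) ×ˢ ((fun y => y - x) ⁻¹' C)) = T (θ x ω) (B ×ˢ C))
    (γ : ℝ≥0∞) (hγfin : γ < ⊤)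
    (hγ : ∫⁻ ω, Measure.map Prod.fst (T ω) (unitCube d) ∂P = γ) :
    (∀ᵐ ω ∂P, IsLocallyFiniteMeasure (Measure.map Prod.snd (T ω))) ∧
    (∀ B : Set (Euc d), MeasurableSet B →
      ∫⁻ ω, T ω ((univ : Set (Euc d)) ×ˢ B) ∂P = γ * volume B) := by
  classical
  obtain ⟨hθmeas, hθ0, hθcomp⟩ := hθ
  -- Basic measurability facts
  have hθx : ∀ x : Euc d, Measurable (θ x) := fun x =>
    hθmeas.comp (measurable_const.prodMk measurable_id)
  have hTS : ∀ S : Set (Euc d × Euc d), MeasurableSet S → Measurable fun ω => T ω S :=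
    fun S hS => (Measure.measurable_coe hS).comp hTm
  have hshift : ∀ (x : Euc d) (g : Ω → ℝ≥0∞), Measurable g →
      ∫⁻ ω, g (θ x ω) ∂P = ∫⁻ ω, g ω ∂P := by
    intro x g hg
    conv_rhs => rw [← hPθ x]
    rw [lintegral_map hg (hθx x)]
  have hIcoM := cubeIco_measurableSet d
  have hIccM := unitCube_measurableSet d
  set Q : (Fin d → ℤ) → Set (Euc d) :=
    fun z => (fun u : Euc d => u - latticePt d z) ⁻¹' cubeIco d with hQdef
  have hQm : ∀ z, MeasurableSet (Q z) := fun z =>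
    (measurable_id.sub_const (latticePt d z)) hIcoM
  -- The source and destination intensity measures
  have hmapsnd : Measurable fun ω => (T ω).map Prod.snd :=
    (Measure.measurable_map _ measurable_snd).comp hTm
  have hmapfst : Measurable fun ω => (T ω).map Prod.fst :=
    (Measure.measurable_map _ measurable_fst).comp hTm
  set ν : Measure (Euc d) := P.bind (fun ω => (T ω).map Prod.snd) with hνdef
  set μm : Measure (Euc d) := P.bind (fun ω => (T ω).map Prod.fst) with hμdef
  have hνap : ∀ B : Set (Euc d), MeasurableSet B →
      ν B = ∫⁻ ω, T ω ((univ : Set (Euc d)) ×ˢ B) ∂P := by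
    intro B hB
    rw [hνdef, Measure.bind_apply hB hmapsnd.aemeasurable]
    refine lintegral_congr fun ω => ?_
    rw [Measure.map_apply measurable_snd hB, Set.univ_prod]
  have hμap : ∀ B : Set (Euc d), MeasurableSet B →
      μm B = ∫⁻ ω, T ω (B ×ˢ (univ : Set (Euc d))) ∂P := by
    intro B hB
    rw [hμdef, Measure.bind_apply hB hmapfst.aemeasurable]
    refine lintegral_congr fun ω => ?_
    rw [Measure.map_apply measurable_fst hB, Set.prod_univ]
  -- Translation invariance of both intensity measures
  have hνinv : ∀ (x : Euc d) (B : Set (Euc d)), MeasurableSet B →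
      ν ((fun y => y - x) ⁻¹' B) = ν B := by
    intro x B hB
    have hB' : MeasurableSet ((fun y : Euc d => y - x) ⁻¹' B) :=
      (measurable_id.sub_const x) hB
    rw [hνap _ hB', hνap _ hB]
    have key : ∀ ω, T ω ((univ : Set (Euc d)) ×ˢ ((fun y => y - x) ⁻¹' B)) =
        T (θ x ω) ((univ : Set (Euc d)) ×ˢ B) := by
      intro ω
      have := hTinv ω x univ B MeasurableSet.univ hB
      simpa using this
    simp_rw [key]
    exact hshift x _ (hTS _ (MeasurableSet.univ.prod hB))
  have hμinv : ∀ (x : Euc d) (B : Set (Euc d)), MeasurableSet B →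
      μm ((fun y => y - x) ⁻¹' B) = μm B := by
    intro x B hB
    have hB' : MeasurableSet ((fun y : Euc d => y - x) ⁻¹' B) :=
      (measurable_id.sub_const x) hB
    rw [hμap _ hB', hμap _ hB]
    have key : ∀ ω, T ω (((fun y => y - x) ⁻¹' B) ×ˢ (univ : Set (Euc d))) =
        T (θ x ω) (B ×ˢ (univ : Set (Euc d))) := by
      intro ω
      have := hTinv ω x B univ hB MeasurableSet.univ
      simpa using this
    simp_rw [key]
    exact hshift x _ (hTS _ (hB.prod MeasurableSet.univ))
  -- The source intensity measure on the unit cube equals γ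
  have hμγ : μm (unitCube d) = γ := by
    rw [hμap _ hIccM, ← hγ]
    refine lintegral_congr fun ω => ?_
    rw [Measure.map_apply measurable_fst hIccM, Set.prod_univ]
  have hμIcofin : μm (cubeIco d) < ⊤ :=
    lt_of_le_of_lt (le_trans (measure_mono (cubeIco_subset_unitCube d)) hμγ.le) hγfin
  -- `μm` is a multiple of Lebesgue measure; its value on the half-open cube is γ
  have hμeq := fun {B} hB => invariant_eq_smul_volume μm hμinv hμIcofin (B := B) hB
  have hμIco : μm (cubeIco d) = γ := by
    have := hμeq hIccM
    rw [hμγ, volume_unitCube, mul_one] at this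
    exact this.symm
  -- Mass transport: ν (cubeIco d) = μm (cubeIco d)
  have step : ∀ z : Fin d → ℤ,
      ∫⁻ ω, T ω (Q z ×ˢ cubeIco d) ∂P = ∫⁻ ω, T ω (cubeIco d ×ˢ Q (-z)) ∂P := by
    intro z
    have hset : ∀ ω, T ω (Q z ×ˢ cubeIco d) =
        T (θ (latticePt d z) ω) (cubeIco d ×ˢ Q (-z)) := by
      intro ω
      have hpre : (fun y : Euc d => y - latticePt d z) ⁻¹' (Q (-z)) = cubeIco d := by
        ext y
        simp only [hQdef, Set.mem_preimage, latticePt_neg, sub_neg_eq_add, sub_add_cancel]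
      rw [← hTinv ω (latticePt d z) (cubeIco d) (Q (-z)) hIcoM (hQm _), hpre]
    simp_rw [hset]
    exact hshift _ _ (hTS _ (hIcoM.prod (hQm _)))
  have hQdisjL : Pairwise (Function.onFun Disjoint fun z => Q z ×ˢ cubeIco d) :=
    fun a b hab => Set.Disjoint.set_prod_left (cube_disjoint hab) _ _
  have hQdisjR : Pairwise (Function.onFun Disjoint fun z => cubeIco d ×ˢ Q z) :=
    fun a b hab => Set.Disjoint.set_prod_right (cube_disjoint hab) _ _
  have hmt : ν (cubeIco d) = μm (cubeIco d) := by
    calc ν (cubeIco d) = ∫⁻ ω, T ω ((univ : Set (Euc d)) ×ˢ cubeIco d) ∂P := hνap _ hIcoM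
      _ = ∫⁻ ω, ∑' z, T ω (Q z ×ˢ cubeIco d) ∂P := by
          refine lintegral_congr fun ω => ?_
          rw [← measure_iUnion hQdisjL (fun z => (hQm z).prod hIcoM),
            ← Set.iUnion_prod_const, cube_cover]
      _ = ∑' z, ∫⁻ ω, T ω (Q z ×ˢ cubeIco d) ∂P :=
          lintegral_tsum fun z => (hTS _ ((hQm z).prod hIcoM)).aemeasurable
      _ = ∑' z, ∫⁻ ω, T ω (cubeIco d ×ˢ Q (-z)) ∂P := tsum_congr step
      _ = ∑' z, ∫⁻ ω, T ω (cubeIco d ×ˢ Q z) ∂P := by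
          have := (Equiv.neg (Fin d → ℤ)).tsum_eq
            (fun z => ∫⁻ ω, T ω (cubeIco d ×ˢ Q z) ∂P)
          simpa using this
      _ = ∫⁻ ω, ∑' z, T ω (cubeIco d ×ˢ Q z) ∂P :=
          (lintegral_tsum fun z => (hTS _ (hIcoM.prod (hQm z))).aemeasurable).symm
      _ = ∫⁻ ω, T ω (cubeIco d ×ˢ (univ : Set (Euc d))) ∂P := by
          refine lintegral_congr fun ω => ?_
          rw [← measure_iUnion hQdisjR (fun z => hIcoM.prod (hQm z)),
            ← Set.prod_iUnion, cube_cover]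
      _ = μm (cubeIco d) := (hμap _ hIcoM).symm
  have hνIco : ν (cubeIco d) = γ := hmt.trans hμIco
  have hνIcofin : ν (cubeIco d) < ⊤ := hνIco ▸ hγfin
  -- `ν` is γ times Lebesgue measure
  have hνeq : ∀ {B : Set (Euc d)}, MeasurableSet B → ν B = γ * volume B := by
    intro B hB
    rw [invariant_eq_smul_volume ν hνinv hνIcofin hB, hνIco]
  refine ⟨?_, ?_⟩
  · -- Almost sure local finiteness of the destination
    have hball : ∀ n : ℕ, ∀ᵐ ω ∂P,
        T ω ((univ : Set (Euc d)) ×ˢ Metric.closedBall (0 : Euc d) n) < ⊤ := by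
      intro n
      apply ae_lt_top (hTS _ (MeasurableSet.univ.prod measurableSet_closedBall))
      rw [← hνap _ measurableSet_closedBall, hνeq measurableSet_closedBall]
      exact (ENNReal.mul_lt_top hγfin (measure_closedBall_lt_top)).ne
    have hae : ∀ᵐ ω ∂P, ∀ n : ℕ,
        T ω ((univ : Set (Euc d)) ×ˢ Metric.closedBall (0 : Euc d) n) < ⊤ :=
      ae_all_iff.2 hball
    filter_upwards [hae] with ω hω
    constructor
    intro x
    refine ⟨Metric.ball x 1, Metric.ball_mem_nhds x one_pos, ?_⟩
    set n : ℕ := ⌈‖x‖⌉₊ + 1 with hn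
    have hsub : Metric.ball x 1 ⊆ Metric.closedBall (0 : Euc d) n := by
      intro y hy
      rw [Metric.mem_closedBall, dist_zero_right]
      have h1 : dist y x < 1 := Metric.mem_ball.1 hy
      calc ‖y‖ = ‖(y - x) + x‖ := by rw [sub_add_cancel]
        _ ≤ ‖y - x‖ + ‖x‖ := norm_add_le _ _
        _ ≤ 1 + ⌈‖x‖⌉₊ := by
            rw [← dist_eq_norm]
            exact add_le_add h1.le (Nat.le_ceil _)
        _ ≤ n := by rw [hn]; push_cast; linarith
    calc (T ω).map Prod.snd (Metric.ball x 1)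
        ≤ (T ω).map Prod.snd (Metric.closedBall (0 : Euc d) n) := measure_mono hsub
      _ = T ω ((univ : Set (Euc d)) ×ˢ Metric.closedBall (0 : Euc d) n) := by
          rw [Measure.map_apply measurable_snd measurableSet_closedBall, Set.univ_prod]
      _ < ⊤ := hω n
  · intro B hB
    rw [← hνap _ hB]
    exact hνeq hB
end
end

section
/- Let W ∈ 𝒦₀ and let μ, ν be finite Borel measures on ℝ^d with μ(ℝ^d) = ν(ℝ^d). Then lim_{r→∞} λ_d(rW)⁻¹ ∫_{rW} (μ(rW − x) − ν(rW − x)) dx = 0, where rW − x := {r w − x : w ∈ W} and λ_d is Lebesgue measure. Equivalently, for every finite signed Borel measure η on ℝ^d with η(ℝ^d) = 0, λ_d(rW)⁻¹ ∫_{rW} η(rW − x) dx → 0 as r → ∞. -/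
open MeasureTheory Filter Set ProbabilityTheory
open scoped ENNReal NNReal Topology Pointwise

noncomputable section

lemma indicator_preimage_add_right' {d : ℕ} (S : Set (Euc d)) (x : Euc d) :
    (fun y : Euc d => S.indicator (1 : Euc d → ℝ≥0∞) (y + x))
      = ((fun y : Euc d => y + x) ⁻¹' S).indicator (1 : Euc d → ℝ≥0∞) := by
  funext y; by_cases hy : y + x ∈ S <;> simp [Set.indicator_apply, hy]

lemma indicator_preimage_add_left' {d : ℕ} (S : Set (Euc d)) (y : Euc d) :
    (fun x : Euc d => S.indicator (1 : Euc d → ℝ≥0∞) (y + x))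
      = ((fun x : Euc d => y + x) ⁻¹' S).indicator (1 : Euc d → ℝ≥0∞) := by
  funext x; by_cases hx : y + x ∈ S <;> simp [Set.indicator_apply, hx]

lemma meas_rep' {d : ℕ} (S : Set (Euc d)) (hS : MeasurableSet S)
    (μ : Measure (Euc d)) (x : Euc d) :
    μ ((fun y => y + x) ⁻¹' S) = ∫⁻ y, S.indicator (1 : Euc d → ℝ≥0∞) (y + x) ∂μ := by
  rw [indicator_preimage_add_right', lintegral_indicator_one (hS.preimage (measurable_add_const x))]

lemma meas_pre' {d : ℕ} (S : Set (Euc d)) (hS : MeasurableSet S)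
    (μ : Measure (Euc d)) [SFinite μ] :
    Measurable fun x : Euc d => μ ((fun y => y + x) ⁻¹' S) := by
  have hs : MeasurableSet {p : Euc d × Euc d | p.2 + p.1 ∈ S} :=
    hS.preimage (measurable_snd.add measurable_fst)
  have := measurable_measure_prodMk_left (ν := μ) hs
  convert this using 2
  rfl

lemma meas_G' {d : ℕ} (S : Set (Euc d)) (hS : MeasurableSet S) :
    Measurable fun y : Euc d => volume (S ∩ (fun x => y + x) ⁻¹' S) := by
  have hs : MeasurableSet {p : Euc d × Euc d | p.2 ∈ S ∧ p.1 + p.2 ∈ S} :=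
    (hS.preimage measurable_snd).inter (hS.preimage (measurable_fst.add measurable_snd))
  have := measurable_measure_prodMk_left (ν := (volume : Measure (Euc d))) hs
  convert this using 2 with y
  rfl

lemma fubini_aux' {d : ℕ} (S : Set (Euc d)) (hS : MeasurableSet S)
    (μ : Measure (Euc d)) [SFinite μ] :
    ∫⁻ x in S, μ ((fun y => y + x) ⁻¹' S) ∂volume
      = ∫⁻ y, volume (S ∩ (fun x => y + x) ⁻¹' S) ∂μ := by
  have hK : Measurable (Function.uncurry fun x y : Euc d =>
      S.indicator (1 : Euc d → ℝ≥0∞) x * S.indicator (1 : Euc d → ℝ≥0∞) (y + x)) :=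
    ((measurable_const.indicator hS).comp measurable_fst).mul
      ((measurable_const.indicator hS).comp (measurable_snd.add measurable_fst))
  calc ∫⁻ x in S, μ ((fun y => y + x) ⁻¹' S) ∂volume
      = ∫⁻ x, S.indicator (fun x => μ ((fun y => y + x) ⁻¹' S)) x ∂volume := by
        rw [lintegral_indicator hS]
    _ = ∫⁻ x, ∫⁻ y, S.indicator (1 : Euc d → ℝ≥0∞) x * S.indicator (1 : Euc d → ℝ≥0∞) (y + x) ∂μ ∂volume := by
        refine lintegral_congr fun x => ?_
        by_cases hx : x ∈ S
        · simp only [Set.indicator_of_mem hx, Pi.one_apply, one_mul]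
          exact meas_rep' S hS μ x
        · simp [Set.indicator_of_notMem hx]
    _ = ∫⁻ y, ∫⁻ x, S.indicator (1 : Euc d → ℝ≥0∞) x * S.indicator (1 : Euc d → ℝ≥0∞) (y + x) ∂volume ∂μ :=
        lintegral_lintegral_swap hK.aemeasurable
    _ = ∫⁻ y, volume (S ∩ (fun x => y + x) ⁻¹' S) ∂μ := by
        refine lintegral_congr fun y => ?_
        have : (fun x : Euc d => S.indicator (1 : Euc d → ℝ≥0∞) x * S.indicator (1 : Euc d → ℝ≥0∞) (y + x))
            = (S ∩ (fun x : Euc d => y + x) ⁻¹' S).indicator (1 : Euc d → ℝ≥0∞) := by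
          funext x
          by_cases hx : x ∈ S <;> by_cases hx2 : y + x ∈ S <;>
            simp [Set.indicator_apply, hx, hx2]
        rw [this, lintegral_indicator_one (hS.inter (hS.preimage (measurable_const_add y)))]

lemma ae_preimage_null' {d : ℕ} (F : Set (Euc d)) (hF : MeasurableSet F) (hF0 : volume F = 0)
    (μ : Measure (Euc d)) [SFinite μ] :
    ∀ᵐ x ∂(volume : Measure (Euc d)), μ ((fun y => y + x) ⁻¹' F) = 0 := by
  have hmeas : Measurable fun x : Euc d => μ ((fun y => y + x) ⁻¹' F) := meas_pre' F hF μ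
  have hind : Measurable (Function.uncurry fun x y : Euc d =>
      F.indicator (1 : Euc d → ℝ≥0∞) (y + x)) :=
    (measurable_const.indicator hF).comp (measurable_snd.add measurable_fst)
  have hint : ∫⁻ x, μ ((fun y => y + x) ⁻¹' F) ∂(volume : Measure (Euc d)) = 0 := by
    calc ∫⁻ x, μ ((fun y => y + x) ⁻¹' F) ∂(volume : Measure (Euc d))
        = ∫⁻ x, ∫⁻ y, F.indicator (1 : Euc d → ℝ≥0∞) (y + x) ∂μ ∂volume :=
          lintegral_congr fun x => meas_rep' F hF μ x
      _ = ∫⁻ y, ∫⁻ x, F.indicator (1 : Euc d → ℝ≥0∞) (y + x) ∂volume ∂μ :=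
          lintegral_lintegral_swap hind.aemeasurable
      _ = ∫⁻ y, volume ((fun x => y + x) ⁻¹' F) ∂μ := by
          refine lintegral_congr fun y => ?_
          rw [indicator_preimage_add_left',
            lintegral_indicator_one (hF.preimage (measurable_const_add y))]
      _ = 0 := by
          have : ∀ y : Euc d, volume ((fun x => y + x) ⁻¹' F) = 0 := fun y => by
            rw [measure_preimage_add volume y F]; exact hF0
          simp [this]
  exact (lintegral_eq_zero_iff hmeas).mp hint

/-- Lemma: for `W ∈ 𝒦₀` and finite Borel measures `μ, ν` of equal total mass,
`λ_d(rW)⁻¹ ∫_{rW} (μ(rW − x) − ν(rW − x)) dx → 0` as `r → ∞`. -/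
theorem averaged_difference_tendsto_zero
    {d : ℕ} (W : Set (Euc d)) (hW : IsK0 W)
    (μ ν : Measure (Euc d)) [IsFiniteMeasure μ] [IsFiniteMeasure ν]
    (hmass : μ univ = ν univ) :
    Tendsto (fun r : ℝ =>
        (volume (r • W)).toReal⁻¹ *
          ∫ x in r • W,
            ((μ ((fun y => y + x) ⁻¹' (r • W))).toReal -
              (ν ((fun y => y + x) ⁻¹' (r • W))).toReal))
      atTop (𝓝 0) := by
  
  obtain ⟨hconv, hbdd, h0⟩ := hW
  set V : Set (Euc d) := interior W with hVdef
  have hVopen : IsOpen V := isOpen_interior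
  have hVconv : Convex ℝ V := hconv.interior
  have h0V : (0 : Euc d) ∈ V := h0
  have hVW : V ⊆ W := interior_subset
  have hvfin : volume V < ⊤ := lt_of_le_of_lt (measure_mono hVW) hbdd.measure_lt_top
  have hvpos : 0 < volume V := hVopen.measure_pos volume ⟨0, h0V⟩
  obtain ⟨ε, hε, hball⟩ := Metric.isOpen_iff.mp hVopen 0 h0V
  set vV : ℝ := (volume V).toReal with hvVdef
  have hvVpos : 0 < vV := ENNReal.toReal_pos hvpos.ne' hvfin.ne
  -- basic facts about the scaled sets
  have hSmeas : ∀ r : ℝ, 0 < r → MeasurableSet (r • V) :=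
    fun r hr => (hVopen.smul₀ hr.ne').measurableSet
  have hSvol : ∀ r : ℝ, 0 ≤ r → volume (r • V) = ENNReal.ofReal (r ^ d) * volume V := by
    intro r hr
    rw [Measure.addHaar_smul, finrank_euclideanSpace_fin, abs_of_nonneg (pow_nonneg hr d)]
  have hSfin : ∀ r : ℝ, 0 < r → volume (r • V) < ⊤ := by
    intro r hr
    rw [hSvol r hr.le]
    exact ENNReal.mul_lt_top ENNReal.ofReal_lt_top hvfin
  have hWV : ∀ r : ℝ, 0 < r → interior (r • W) = r • V :=
    fun r hr => interior_smul₀ hr.ne' W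
  have hfrontier : ∀ r : ℝ, 0 < r → volume (frontier (r • W)) = 0 :=
    fun r hr => (hconv.smul r).addHaar_frontier volume
  have hvolWV : ∀ r : ℝ, 0 < r → volume (r • W) = volume (r • V) := by
    intro r hr
    refine le_antisymm ?_ (measure_mono (by rw [← hWV r hr]; exact interior_subset))
    calc volume (r • W) ≤ volume (closure (r • W)) := measure_mono subset_closure
      _ = volume (interior (r • W) ∪ frontier (r • W)) := by
          rw [← closure_eq_interior_union_frontier]
      _ ≤ volume (interior (r • W)) + volume (frontier (r • W)) := measure_union_le _ _
      _ = volume (r • V) := by rw [hfrontier r hr, add_zero, hWV r hr]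
  have hcr : ∀ r : ℝ, 0 < r → (volume (r • W)).toReal = r ^ d * vV := by
    intro r hr
    rw [hvolWV r hr, hSvol r hr.le, ENNReal.toReal_mul,
      ENNReal.toReal_ofReal (pow_nonneg hr.le d)]
  have hcpos : ∀ r : ℝ, 0 < r → 0 < (volume (r • W)).toReal := by
    intro r hr; rw [hcr r hr]; positivity
  set G : ℝ → Euc d → ℝ≥0∞ :=
    fun r y => volume ((r • V) ∩ (fun x => y + x) ⁻¹' (r • V)) with hGdef
  set H : ℝ → Euc d → ℝ :=
    fun r y => (volume (r • W)).toReal⁻¹ * (G r y).toReal with hHdef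
  have hGmeas : ∀ r : ℝ, 0 < r → Measurable (G r) := fun r hr => meas_G' _ (hSmeas r hr)
  have hGle : ∀ r y, G r y ≤ volume (r • V) := fun r y => measure_mono inter_subset_left
  have hGfin : ∀ r : ℝ, 0 < r → ∀ y, G r y < ⊤ :=
    fun r hr y => lt_of_le_of_lt (hGle r y) (hSfin r hr)
  have hHnonneg : ∀ r : ℝ, 0 < r → ∀ y, 0 ≤ H r y :=
    fun r hr y => mul_nonneg (inv_nonneg.mpr (hcpos r hr).le) ENNReal.toReal_nonneg
  have hHle : ∀ r : ℝ, 0 < r → ∀ y, H r y ≤ 1 := by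
    intro r hr y
    have h1 : (G r y).toReal ≤ (volume (r • W)).toReal := by
      rw [hvolWV r hr]
      exact ENNReal.toReal_mono (hSfin r hr).ne (hGle r y)
    calc H r y ≤ (volume (r • W)).toReal⁻¹ * (volume (r • W)).toReal :=
          mul_le_mul_of_nonneg_left h1 (inv_nonneg.mpr (hcpos r hr).le)
      _ = 1 := inv_mul_cancel₀ (hcpos r hr).ne'
  -- the key identity, valid for each r > 0
  have key : ∀ r : ℝ, 0 < r →
      (volume (r • W)).toReal⁻¹ *
          ∫ x in r • W,
            ((μ ((fun y => y + x) ⁻¹' (r • W))).toReal -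
              (ν ((fun y => y + x) ⁻¹' (r • W))).toReal)
        = (∫ y, H r y ∂μ) - (∫ y, H r y ∂ν) := by
    intro r hr
    have hS : MeasurableSet (r • V) := hSmeas r hr
    have hF : MeasurableSet (closure (r • W) \ (r • V)) := isClosed_closure.measurableSet.diff hS
    have hFnull : volume (closure (r • W) \ (r • V)) = 0 := by
      have : closure (r • W) \ (r • V) = frontier (r • W) := by rw [← hWV r hr]; rfl
      rw [this]; exact hfrontier r hr
    have hsubWS : r • W ⊆ (r • V) ∪ (closure (r • W) \ (r • V)) := by
      intro z hz
      by_cases hzS : z ∈ r • V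
      · exact Or.inl hzS
      · exact Or.inr ⟨subset_closure hz, hzS⟩
    have hsubSW : (r • V) ⊆ r • W := by rw [← hWV r hr]; exact interior_subset
    have hae : ∀ (κ : Measure (Euc d)), IsFiniteMeasure κ →
        ∀ᵐ x ∂(volume : Measure (Euc d)),
          κ ((fun y => y + x) ⁻¹' (r • W)) = κ ((fun y => y + x) ⁻¹' (r • V)) := by
      intro κ hκ
      filter_upwards [ae_preimage_null' _ hF hFnull κ] with x hx
      refine le_antisymm ?_ (measure_mono (preimage_mono hsubSW))
      calc κ ((fun y => y + x) ⁻¹' (r • W))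
          ≤ κ ((fun y => y + x) ⁻¹' ((r • V) ∪ (closure (r • W) \ (r • V)))) :=
            measure_mono (preimage_mono hsubWS)
        _ = κ ((fun y => y + x) ⁻¹' (r • V) ∪ (fun y => y + x) ⁻¹' (closure (r • W) \ (r • V))) := by
            rw [preimage_union]
        _ ≤ κ ((fun y => y + x) ⁻¹' (r • V)) + κ ((fun y => y + x) ⁻¹' (closure (r • W) \ (r • V))) :=
            measure_union_le _ _
        _ = κ ((fun y => y + x) ⁻¹' (r • V)) := by rw [hx, add_zero]
    have hrestr : (volume : Measure (Euc d)).restrict (r • W) = volume.restrict (r • V) := by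
      refine Measure.restrict_congr_set (ae_eq_set.mpr ⟨?_, ?_⟩)
      · refine measure_mono_null (fun z hz => ?_) hFnull
        exact ⟨subset_closure hz.1, hz.2⟩
      · have : (r • V) \ r • W = ∅ := diff_eq_empty.mpr hsubSW
        simp [this]
    haveI hfinres : IsFiniteMeasure ((volume : Measure (Euc d)).restrict (r • V)) :=
      ⟨by rw [Measure.restrict_apply_univ]; exact hSfin r hr⟩
    have hint : ∀ (κ : Measure (Euc d)), IsFiniteMeasure κ →
        Integrable (fun x => (κ ((fun y => y + x) ⁻¹' (r • V))).toReal)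
          ((volume : Measure (Euc d)).restrict (r • V)) := by
      intro κ hκ
      refine (integrable_const ((κ univ).toReal)).mono'
        ((meas_pre' (r • V) hS κ).ennreal_toReal.aestronglyMeasurable) (ae_of_all _ fun x => ?_)
      rw [Real.norm_eq_abs, abs_of_nonneg ENNReal.toReal_nonneg]
      exact ENNReal.toReal_mono (measure_ne_top κ _) (measure_mono (subset_univ _))
    have hval : ∀ (κ : Measure (Euc d)), IsFiniteMeasure κ →
        ∫ x in r • V, (κ ((fun y => y + x) ⁻¹' (r • V))).toReal ∂volume
          = ∫ y, (G r y).toReal ∂κ := by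
      intro κ hκ
      haveI := hκ
      calc ∫ x in r • V, (κ ((fun y => y + x) ⁻¹' (r • V))).toReal ∂volume
          = (∫⁻ x in r • V, κ ((fun y => y + x) ⁻¹' (r • V)) ∂volume).toReal := by
            refine integral_toReal ((meas_pre' (r • V) hS κ).aemeasurable.restrict)
              (ae_of_all _ fun x => measure_lt_top κ _)
        _ = (∫⁻ y, G r y ∂κ).toReal := by rw [fubini_aux' (r • V) hS κ]
        _ = ∫ y, (G r y).toReal ∂κ := by
            refine (integral_toReal (hGmeas r hr).aemeasurable
              (ae_of_all _ fun y => hGfin r hr y)).symm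
    calc (volume (r • W)).toReal⁻¹ *
          ∫ x in r • W,
            ((μ ((fun y => y + x) ⁻¹' (r • W))).toReal -
              (ν ((fun y => y + x) ⁻¹' (r • W))).toReal)
        = (volume (r • W)).toReal⁻¹ *
          ∫ x in r • V,
            ((μ ((fun y => y + x) ⁻¹' (r • V))).toReal -
              (ν ((fun y => y + x) ⁻¹' (r • V))).toReal) ∂volume := by
          rw [hrestr]
          congr 1
          refine integral_congr_ae ?_
          filter_upwards [ae_restrict_of_ae (hae μ inferInstance),
            ae_restrict_of_ae (hae ν inferInstance)] with x h1 h2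
          rw [h1, h2]
      _ = (volume (r • W)).toReal⁻¹ *
          ((∫ x in r • V, (μ ((fun y => y + x) ⁻¹' (r • V))).toReal ∂volume) -
            (∫ x in r • V, (ν ((fun y => y + x) ⁻¹' (r • V))).toReal ∂volume)) := by
          rw [integral_sub (hint μ inferInstance) (hint ν inferInstance)]
      _ = (volume (r • W)).toReal⁻¹ *
          ((∫ y, (G r y).toReal ∂μ) - (∫ y, (G r y).toReal ∂ν)) := by
          rw [hval μ inferInstance, hval ν inferInstance]
      _ = (∫ y, H r y ∂μ) - (∫ y, H r y ∂ν) := by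
          rw [mul_sub, hHdef]
          simp only
          rw [integral_const_mul, integral_const_mul]
  -- pointwise convergence of H r y to 1
  have hlim : ∀ y : Euc d, Tendsto (fun r => H r y) atTop (𝓝 1) := by
    intro y
    set t : ℝ := ‖y‖ / ε + 1 with htdef
    have htpos : 0 < t := by positivity
    have hyt : y ∈ t • V := by
      refine ⟨t⁻¹ • y, hball ?_, ?_⟩
      · rw [Metric.mem_ball, dist_zero_right, norm_smul, norm_inv, Real.norm_eq_abs,
          abs_of_pos htpos]
        rw [inv_mul_lt_iff₀ htpos, htdef]
        have hε' : (‖y‖ / ε + 1) * ε = ‖y‖ + ε := by field_simp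
        rw [hε']
        linarith
      · show t • (t⁻¹ • y) = y
        rw [smul_smul, mul_inv_cancel₀ htpos.ne', one_smul]
    have hlower : ∀ r : ℝ, t ≤ r → ((r - t) / r) ^ d ≤ H r y := by
      intro r hrt
      have hr : 0 < r := lt_of_lt_of_le htpos hrt
      have hdecomp : (r - t) • V + t • V = r • V := by
        rw [← hVconv.add_smul (sub_nonneg.mpr hrt) htpos.le, sub_add_cancel]
      have hsub : (r - t) • V ⊆ (r • V) ∩ (fun x => y + x) ⁻¹' (r • V) := by
        intro z hz
        constructor
        · rw [← hdecomp]
          have h0t : (0 : Euc d) ∈ t • V := by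
            simpa using smul_mem_smul_set (a := t) h0V
          simpa using Set.add_mem_add hz h0t
        · show y + z ∈ r • V
          have h2 := Set.add_mem_add hz hyt
          rw [hdecomp] at h2
          rwa [add_comm]
      have hGlb : ENNReal.ofReal ((r - t) ^ d) * volume V ≤ G r y := by
        rw [← hSvol (r - t) (sub_nonneg.mpr hrt)]
        exact measure_mono hsub
      have h1 : (r - t) ^ d * vV ≤ (G r y).toReal := by
        have h2 := ENNReal.toReal_mono (hGfin r hr y).ne hGlb
        rwa [ENNReal.toReal_mul,
          ENNReal.toReal_ofReal (pow_nonneg (sub_nonneg.mpr hrt) d)] at h2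
      have heq : ((r - t) / r) ^ d = (volume (r • W)).toReal⁻¹ * ((r - t) ^ d * vV) := by
        rw [hcr r hr, div_pow]
        field_simp
      rw [heq]
      exact mul_le_mul_of_nonneg_left h1 (inv_nonneg.mpr (hcpos r hr).le)
    have hlow_tendsto : Tendsto (fun r : ℝ => ((r - t) / r) ^ d) atTop (𝓝 1) := by
      have h1 : Tendsto (fun r : ℝ => (r - t) / r) atTop (𝓝 1) := by
        have h2 : (fun r : ℝ => (r - t) / r) =ᶠ[atTop] fun r => 1 - t / r := by
          filter_upwards [eventually_gt_atTop (0 : ℝ)] with r hr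
          field_simp
        rw [tendsto_congr' h2]
        have h3 : Tendsto (fun r : ℝ => t / r) atTop (𝓝 0) :=
          Tendsto.div_atTop tendsto_const_nhds tendsto_id
        simpa using tendsto_const_nhds.sub h3
      simpa using h1.pow d
    refine tendsto_of_tendsto_of_tendsto_of_le_of_le' hlow_tendsto tendsto_const_nhds ?_ ?_
    · filter_upwards [eventually_ge_atTop t] with r hr
      exact hlower r hr
    · filter_upwards [eventually_gt_atTop (0 : ℝ)] with r hr
      exact hHle r hr y
  -- dominated convergence
  have hDCT : ∀ (κ : Measure (Euc d)), IsFiniteMeasure κ →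
      Tendsto (fun r => ∫ y, H r y ∂κ) atTop (𝓝 (κ univ).toReal) := by
    intro κ hκ
    haveI := hκ
    have h1 : (∫ y, (1 : ℝ) ∂κ) = (κ univ).toReal := by simp; rfl
    rw [← h1]
    refine tendsto_integral_filter_of_dominated_convergence (fun _ => (1 : ℝ)) ?_ ?_
      (integrable_const 1) (ae_of_all _ fun y => hlim y)
    · filter_upwards [eventually_gt_atTop (0 : ℝ)] with r hr
      exact ((hGmeas r hr).ennreal_toReal.const_mul _).aestronglyMeasurable
    · filter_upwards [eventually_gt_atTop (0 : ℝ)] with r hr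
      refine ae_of_all _ fun y => ?_
      rw [Real.norm_eq_abs, abs_of_nonneg (hHnonneg r hr y)]
      exact hHle r hr y
  have hsub : Tendsto (fun r => (∫ y, H r y ∂μ) - (∫ y, H r y ∂ν)) atTop
      (𝓝 ((μ univ).toReal - (ν univ).toReal)) :=
    (hDCT μ inferInstance).sub (hDCT ν inferInstance)
  rw [hmass, sub_self] at hsub
  refine hsub.congr' ?_
  filter_upwards [eventually_gt_atTop (0 : ℝ)] with r hr
  exact (key r hr).symm
end
end
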